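/- arXiv:2010.06129 — 7 statements merged into one kernel-verified Lean document; each statement's English description precedes it below -/
import Mathlib

section
/- Let r be a positive integer, V an r-dimensional complex vector space with basis e = (e_0,…,e_{r−1}), and α a nonzero complex number. Let f be the linear automorphism of V determined by f(e_i)=e_{i+1} for 0≤i≤r−2 and f(e_{r−1})=α^r e_0, and let the group G_r={a∈ℂ : a^r=1} act on V by a•e_i = a^i e_i. Then every complex subspace V'⊆V which is G_r-invariant and satisfies f(V')⊆V' is equal to 0 or to V. -/
/-- a `G_r`-invariant subspace preserved by the cyclic automorphism `f`
is trivial. -/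
theorem cyclic_invariant_subspace_trivial
    (r : ℕ) (hr : 0 < r) (V : Type*) [AddCommGroup V] [Module ℂ V]
    (e : Module.Basis (Fin r) ℂ V) (α : ℂ) (hα : α ≠ 0)
    (f : V →ₗ[ℂ] V)
    (hf : ∀ (i : Fin r) (h : (i : ℕ) + 1 < r), f (e i) = e ⟨(i : ℕ) + 1, h⟩)
    (hlast : f (e ⟨r - 1, Nat.sub_lt hr Nat.one_pos⟩) = α ^ r • e ⟨0, hr⟩)
    (V' : Submodule ℂ V)
    (hfV' : V'.map f ≤ V')
    (hGV' : ∀ a : ℂ, a ^ r = 1 →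
      V'.map (e.constr ℂ fun i : Fin r => a ^ (i : ℕ) • e i) ≤ V') :
    V' = ⊥ ∨ V' = ⊤ := by
  haveI : NeZero r := ⟨hr.ne'⟩
  set ζ : ℂ := Complex.exp (2 * Real.pi * Complex.I / r) with hζdef
  have hζ : IsPrimitiveRoot ζ r := Complex.isPrimitiveRoot_exp r hr.ne'
  -- step: e j ∈ V' → e (j+1) ∈ V'
  have step : ∀ j : Fin r, e j ∈ V' → e (j + 1) ∈ V' := by
    intro j hj
    have hfj : f (e j) ∈ V' := hfV' ⟨e j, hj, rfl⟩
    by_cases h : (j : ℕ) + 1 < r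
    · have hval : (j + 1 : Fin r) = ⟨(j : ℕ) + 1, h⟩ := by
        ext
        have e1 : (1 : ℕ) % r = 1 := Nat.mod_eq_of_lt (by omega)
        simp only [Fin.val_add, Fin.val_one', e1]
        exact Nat.mod_eq_of_lt h
      rw [hval, ← hf j h]; exact hfj
    · have hj' : (j : ℕ) = r - 1 := by have := j.is_lt; omega
      have hjeq : j = ⟨r - 1, Nat.sub_lt hr Nat.one_pos⟩ := by ext; simp [hj']
      have h0 : (j + 1 : Fin r) = ⟨0, hr⟩ := by
        ext
        simp only [Fin.val_add, Fin.val_one', hj']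
        by_cases hr1 : r = 1
        · subst hr1; simp
        · have e1 : (1 : ℕ) % r = 1 := Nat.mod_eq_of_lt (by omega)
          rw [e1, Nat.sub_add_cancel hr, Nat.mod_self]
      rw [h0]
      have hmem : α ^ r • e ⟨0, hr⟩ ∈ V' := by rw [← hlast, ← hjeq]; exact hfj
      have hα' : (α : ℂ) ^ r ≠ 0 := pow_ne_zero _ hα
      have := V'.smul_mem (α ^ r)⁻¹ hmem
      rwa [inv_smul_smul₀ hα'] at this
  -- cycle: one basis vector gives all
  open Fin.NatCast in
  have cycle : ∀ i : Fin r, e i ∈ V' → ∀ j : Fin r, e j ∈ V' := by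
    intro i hi j
    have all : ∀ n : ℕ, e (i + (n : Fin r)) ∈ V' := by
      intro n
      induction n with
      | zero => simpa using hi
      | succ n ih =>
        have := step _ ih
        rw [Nat.cast_add, Nat.cast_one, ← add_assoc]
        exact this
    have := all (j - i).val
    rwa [Fin.cast_val_eq_self, add_comm, sub_add_cancel] at this
  -- key: coordinate components are in V'
  have key : ∀ v ∈ V', ∀ i : Fin r, (e.repr v i) • e i ∈ V' := by
    intro v hv i
    set g : ℕ → V →ₗ[ℂ] V :=
      fun k => e.constr ℂ fun j : Fin r => (ζ ^ k) ^ (j : ℕ) • e j with hg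
    have hgv : ∀ k, g k v ∈ V' := by
      intro k
      refine hGV' (ζ ^ k) ?_ ⟨v, hv, rfl⟩
      rw [← pow_mul, mul_comm, pow_mul, hζ.pow_eq_one, one_pow]
    have hsum : (∑ k ∈ Finset.range r, ζ ^ (k * (r - (i : ℕ))) • g k v) ∈ V' :=
      Submodule.sum_mem _ fun k _ => V'.smul_mem _ (hgv k)
    have S : ∀ j : Fin r,
        (∑ k ∈ Finset.range r, (ζ ^ ((r - (i : ℕ)) + (j : ℕ))) ^ k)
          = if j = i then (r : ℂ) else 0 := by
      intro j
      by_cases hji : j = i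
      · subst hji
        simp [Nat.sub_add_cancel j.is_lt.le, hζ.pow_eq_one]
      · have hne : ζ ^ ((r - (i : ℕ)) + (j : ℕ)) ≠ 1 := by
          intro h
          have hd := (hζ.pow_eq_one_iff_dvd _).mp h
          obtain ⟨c, hc⟩ := hd
          have hi' := i.is_lt
          have hj' := j.is_lt
          have hc0 : c ≠ 0 := by rintro rfl; omega
          have hc2 : c < 2 := by
            by_contra hcc
            push_neg at hcc
            have : r * 2 ≤ r * c := Nat.mul_le_mul_left r hcc
            omega
          have hc1 : c = 1 := by omega
          rw [hc1, mul_one] at hc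
          exact hji (Fin.ext (by omega))
        rw [if_neg hji, geom_sum_eq hne]
        have hx1 : (ζ ^ ((r - (i : ℕ)) + (j : ℕ))) ^ r = 1 := by
          rw [← pow_mul, mul_comm, pow_mul, hζ.pow_eq_one, one_pow]
        rw [hx1]
        simp
    have heq : (∑ k ∈ Finset.range r, ζ ^ (k * (r - (i : ℕ))) • g k v)
        = (r : ℂ) • ((e.repr v i) • e i) := by
      have h1 : ∀ k, g k v = ∑ j : Fin r, (e.repr v j * (ζ ^ k) ^ (j : ℕ)) • e j := by
        intro k
        conv_lhs => rw [← e.sum_repr v]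
        rw [map_sum]
        refine Finset.sum_congr rfl fun j _ => ?_
        rw [map_smul, hg]
        simp only [Module.Basis.constr_basis]
        rw [smul_smul]
      calc (∑ k ∈ Finset.range r, ζ ^ (k * (r - (i:ℕ))) • g k v)
          = ∑ k ∈ Finset.range r, ∑ j : Fin r,
              ((ζ ^ ((r - (i:ℕ)) + (j:ℕ))) ^ k * e.repr v j) • e j := by
            refine Finset.sum_congr rfl fun k _ => ?_
            rw [h1 k, Finset.smul_sum]
            refine Finset.sum_congr rfl fun j _ => ?_
            rw [smul_smul]
            congr 1
            rw [← pow_mul, ← pow_mul]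
            rw [show ((r : ℕ) - (i : ℕ) + (j : ℕ)) * k
                  = k * (r - (i : ℕ)) + k * (j : ℕ) from by ring, pow_add]
            ring
        _ = ∑ j : Fin r, ((∑ k ∈ Finset.range r,
              (ζ ^ ((r - (i:ℕ)) + (j:ℕ))) ^ k) * e.repr v j) • e j := by
            rw [Finset.sum_comm]
            refine Finset.sum_congr rfl fun j _ => ?_
            rw [← Finset.sum_smul, ← Finset.sum_mul]
        _ = (r : ℂ) • ((e.repr v i) • e i) := by
            simp only [S]
            rw [Finset.sum_eq_single i]
            · simp [smul_smul]
            · intro b _ hb; simp [hb]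
            · intro h; exact absurd (Finset.mem_univ i) h
    rw [heq] at hsum
    have hrne : (r : ℂ) ≠ 0 := Nat.cast_ne_zero.mpr hr.ne'
    have := V'.smul_mem (r : ℂ)⁻¹ hsum
    rwa [inv_smul_smul₀ hrne] at this
  -- finish
  rcases eq_or_ne V' ⊥ with h | h
  · exact Or.inl h
  · right
    obtain ⟨v, hv, hv0⟩ := Submodule.ne_bot_iff V' |>.mp h
    have h1 : e.repr v ≠ 0 := by
      intro h'
      exact hv0 (by simpa using (LinearEquiv.map_eq_zero_iff e.repr).mp h')
    obtain ⟨i, hi⟩ := Finsupp.ne_iff.mp h1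
    simp only [Finsupp.coe_zero, Pi.zero_apply] at hi
    have hei : e i ∈ V' := by
      have := V'.smul_mem (e.repr v i)⁻¹ (key v hv i)
      rwa [inv_smul_smul₀ hi] at this
    have hall := cycle i hei
    rw [← top_le_iff, ← e.span_eq, Submodule.span_le]
    rintro x ⟨j, rfl⟩
    exact hall j
end

section
/- Let C be a positive number with C ≥ √r·|α|. For any h∈ℋ(f,e) such that the operator norm |f|_h ≤ C, one has |e_i|_h ≤ |α|^{−r}·C^{(r+1)/2+i} for i=0,…,r−2, and |e_{r−1}|_h ≤ C^{(r−1)/2}. -/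
structure HermMetric (r : ℕ) {V : Type*} [AddCommGroup V] [Module ℂ V]
    (e : Module.Basis (Fin r) ℂ V) (h : V → V → ℂ) : Prop where
  add_left : ∀ x y z : V, h (x + y) z = h x z + h y z
  smul_left : ∀ (c : ℂ) (x y : V), h (c • x) y = (starRingEnd ℂ) c * h x y
  conj_symm : ∀ x y : V, h y x = (starRingEnd ℂ) (h x y)
  pos_def : ∀ x : V, x ≠ 0 → 0 < (h x x).re
  orthogonal : ∀ i j : Fin r, i ≠ j → h (e i) (e j) = 0
  prod_one : ∏ i : Fin r, h (e i) (e i) = 1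

lemma seq_bounds (r : ℕ) (hr : 0 < r) (C A : ℝ) (hCpos : 0 < C) (hApos : 0 < A)
    (a : Fin r → ℝ) (ha : ∀ i, 0 < a i) (hprod : ∏ i, a i = 1)
    (hstep : ∀ (n : ℕ) (hn : n + 1 < r),
      a ⟨n+1, hn⟩ ≤ C^2 * a ⟨n, Nat.lt_of_succ_lt hn⟩)
    (hlaststep : A^(2*r) * a ⟨0, hr⟩ ≤ C^2 * a ⟨r-1, Nat.sub_lt hr Nat.one_pos⟩) :
    (∀ (n : ℕ) (hn : n + 1 < r),
      a ⟨n, Nat.lt_of_succ_lt hn⟩ ≤ C^(2*n+r+1) / A^(2*r)) ∧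
    a ⟨r-1, Nat.sub_lt hr Nat.one_pos⟩ ≤ C^(r-1) := by
  have hlt : r - 1 < r := Nat.sub_lt hr Nat.one_pos
  -- upward chain
  have hchain : ∀ (n : ℕ) (hn : n < r), a ⟨n, hn⟩ ≤ C^(2*n) * a ⟨0, hr⟩ := by
    intro n
    induction n with
    | zero => intro hn; simp
    | succ k ih =>
      intro hn
      have hk : k < r := Nat.lt_of_succ_lt hn
      calc a ⟨k+1, hn⟩ ≤ C^2 * a ⟨k, hk⟩ := hstep k hn
        _ ≤ C^2 * (C^(2*k) * a ⟨0, hr⟩) :=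
            mul_le_mul_of_nonneg_left (ih hk) (sq_nonneg C)
        _ = C^(2*(k+1)) * a ⟨0, hr⟩ := by ring
  -- downward chain
  have hlow : ∀ (k : ℕ), k < r →
      a ⟨r-1, hlt⟩ ≤ C^(2*k) * a ⟨r-1-k, by omega⟩ := by
    intro k
    induction k with
    | zero => intro _; simp
    | succ k ih =>
      intro hk
      have hk' : k < r := by omega
      have h1 := ih hk'
      have hn1 : (r-1-(k+1)) + 1 < r := by omega
      have h2 := hstep (r-1-(k+1)) hn1
      have he : (⟨r-1-(k+1)+1, hn1⟩ : Fin r) = ⟨r-1-k, by omega⟩ :=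
        Fin.mk_eq_mk.mpr (by omega)
      rw [he] at h2
      calc a ⟨r-1, hlt⟩ ≤ C^(2*k) * a ⟨r-1-k, by omega⟩ := h1
        _ ≤ C^(2*k) * (C^2 * a ⟨r-1-(k+1), by omega⟩) :=
            mul_le_mul_of_nonneg_left h2 (by positivity)
        _ = C^(2*(k+1)) * a ⟨r-1-(k+1), by omega⟩ := by ring
  have hlow' : ∀ i : Fin r, a ⟨r-1, hlt⟩ ≤ C^(2*(r-1-(i:ℕ))) * a i := by
    intro i
    have h1 := hlow (r-1-(i:ℕ)) (by omega)
    have he : (⟨r-1-(r-1-(i:ℕ)), by omega⟩ : Fin r) = i :=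
      Fin.ext (by simp; omega)
    rwa [he] at h1
  -- product bound
  have hsum : ∑ i : Fin r, 2*(r-1-(i:ℕ)) = r*(r-1) := by
    rw [Fin.sum_univ_eq_sum_range (fun i => 2*(r-1-i)) r]
    calc ∑ i ∈ Finset.range r, 2*(r-1-i)
        = ∑ i ∈ Finset.range r, 2*i := Finset.sum_range_reflect (fun j => 2*j) r
      _ = (∑ i ∈ Finset.range r, i) * 2 := by rw [Finset.sum_mul]; exact Finset.sum_congr rfl fun i _ => mul_comm 2 i
      _ = r*(r-1) := Finset.sum_range_id_mul_two r
  have hpowr : (a ⟨r-1, hlt⟩)^r ≤ C ^ (r*(r-1)) := by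
    calc (a ⟨r-1, hlt⟩)^r = ∏ _i : Fin r, a ⟨r-1, hlt⟩ := by
          rw [Finset.prod_const, Finset.card_univ, Fintype.card_fin]
      _ ≤ ∏ i : Fin r, (C^(2*(r-1-(i:ℕ))) * a i) :=
          Finset.prod_le_prod (fun i _ => (ha _).le) (fun i _ => hlow' i)
      _ = (∏ i : Fin r, C^(2*(r-1-(i:ℕ)))) * ∏ i : Fin r, a i :=
          Finset.prod_mul_distrib
      _ = C ^ (∑ i : Fin r, 2*(r-1-(i:ℕ))) * 1 := by
          rw [Finset.prod_pow_eq_pow_sum, hprod]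
      _ = C ^ (r*(r-1)) := by rw [hsum, mul_one]
  have hClast : a ⟨r-1, hlt⟩ ≤ C ^ (r-1) := by
    have h1 : (a ⟨r-1, hlt⟩)^r ≤ (C^(r-1))^r := by
      rw [← pow_mul, mul_comm (r-1) r]; exact hpowr
    exact (pow_le_pow_iff_left₀ (ha _).le (by positivity) hr.ne').mp h1
  refine ⟨?_, hClast⟩
  intro n hn
  have ha0 : a ⟨0, hr⟩ ≤ C^2 * a ⟨r-1, hlt⟩ / A^(2*r) := by
    rw [le_div_iff₀ (by positivity)]
    nlinarith [hlaststep]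
  calc a ⟨n, Nat.lt_of_succ_lt hn⟩ ≤ C^(2*n) * a ⟨0, hr⟩ :=
        hchain n (Nat.lt_of_succ_lt hn)
    _ ≤ C^(2*n) * (C^2 * a ⟨r-1, hlt⟩ / A^(2*r)) :=
        mul_le_mul_of_nonneg_left ha0 (by positivity)
    _ ≤ C^(2*n) * (C^2 * C^(r-1) / A^(2*r)) := by
        gcongr
    _ = C^(2*n+r+1) / A^(2*r) := by
        rw [← mul_div_assoc, ← mul_assoc, ← pow_add, ← pow_add,
          show 2*n+2+(r-1) = 2*n+r+1 by omega]

/-- upper bounds for the norms of the basis vectors when the operator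
norm of `f` is bounded by `C`. -/
theorem basis_norm_upper_bounds
    (r : ℕ) (hr : 0 < r) (V : Type*) [AddCommGroup V] [Module ℂ V]
    (e : Module.Basis (Fin r) ℂ V) (α : ℂ) (hα : α ≠ 0)
    (f : V →ₗ[ℂ] V)
    (hf : ∀ (i : Fin r) (h : (i : ℕ) + 1 < r), f (e i) = e ⟨(i : ℕ) + 1, h⟩)
    (hlast : f (e ⟨r - 1, Nat.sub_lt hr Nat.one_pos⟩) = α ^ r • e ⟨0, hr⟩)
    (C : ℝ) (hCpos : 0 < C) (hC : Real.sqrt r * ‖α‖ ≤ C)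
    (h : V → V → ℂ) (hMet : HermMetric r e h)
    (hfC : ∀ x : V, (h (f x) (f x)).re ≤ C ^ 2 * (h x x).re) :
    (∀ i : Fin r, (i : ℕ) + 1 < r →
      Real.sqrt (h (e i) (e i)).re ≤
        ‖α‖ ^ (-(r : ℝ)) * C ^ (((r : ℝ) + 1) / 2 + ((i : ℕ) : ℝ))) ∧
    Real.sqrt (h (e ⟨r - 1, Nat.sub_lt hr Nat.one_pos⟩)
        (e ⟨r - 1, Nat.sub_lt hr Nat.one_pos⟩)).re ≤ C ^ (((r : ℝ) - 1) / 2) := by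
  have hApos : 0 < ‖α‖ := norm_pos_iff.mpr hα
  set A := ‖α‖ with hAdef
  set a : Fin r → ℝ := fun i => (h (e i) (e i)).re with haa
  have ha_pos : ∀ i, 0 < a i := fun i => hMet.pos_def _ (e.ne_zero i)
  have hreal : ∀ x : V, h x x = ((h x x).re : ℂ) := fun x =>
    (Complex.conj_eq_iff_re.mp (hMet.conj_symm x x).symm).symm
  have smul_right : ∀ (c : ℂ) (x y : V), h x (c • y) = c * h x y := by
    intro c x y
    rw [hMet.conj_symm (c • y) x, hMet.smul_left, map_mul, Complex.conj_conj,
      hMet.conj_symm x y, Complex.conj_conj]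
  have hprod : ∏ i : Fin r, a i = 1 := by
    have h1 : ((∏ i : Fin r, a i : ℝ) : ℂ) = 1 := by
      push_cast
      rw [← hMet.prod_one]
      exact Finset.prod_congr rfl fun i _ => (hreal (e i)).symm
    exact_mod_cast h1
  have hstep : ∀ (n : ℕ) (hn : n + 1 < r),
      a ⟨n+1, hn⟩ ≤ C^2 * a ⟨n, Nat.lt_of_succ_lt hn⟩ := by
    intro n hn
    have h1 := hfC (e ⟨n, Nat.lt_of_succ_lt hn⟩)
    rwa [hf ⟨n, Nat.lt_of_succ_lt hn⟩ hn] at h1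
  have hlaststep : A^(2*r) * a ⟨0, hr⟩ ≤ C^2 * a ⟨r-1, Nat.sub_lt hr Nat.one_pos⟩ := by
    have hkey := hfC (e ⟨r-1, Nat.sub_lt hr Nat.one_pos⟩)
    rw [hlast, hMet.smul_left, smul_right, hreal (e ⟨0, hr⟩)] at hkey
    have h2 : ((starRingEnd ℂ) (α ^ r) * (α ^ r * (((h (e ⟨0,hr⟩) (e ⟨0,hr⟩)).re : ℝ) : ℂ))) =
        ((A ^ (2*r) * a ⟨0, hr⟩ : ℝ) : ℂ) := by
      rw [← mul_assoc, mul_comm ((starRingEnd ℂ) (α^r)) (α^r), Complex.mul_conj]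
      push_cast [Complex.normSq_eq_norm_sq, norm_pow]
      rw [haa]
      push_cast
      ring
    rw [h2] at hkey
    simpa [← Complex.ofReal_pow] using hkey
  obtain ⟨hbound, hbound_last⟩ := seq_bounds r hr C A hCpos hApos a ha_pos hprod hstep hlaststep
  constructor
  · intro i hi
    have h1 := hbound (i : ℕ) hi
    have he : (⟨(i : ℕ), Nat.lt_of_succ_lt hi⟩ : Fin r) = i := Fin.ext rfl
    rw [he] at h1
    have hRnn : 0 ≤ A ^ (-(r : ℝ)) * C ^ (((r : ℝ) + 1) / 2 + ((i : ℕ) : ℝ)) := by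
      positivity
    have hrw : (A ^ (-(r : ℝ)) * C ^ (((r : ℝ) + 1) / 2 + ((i : ℕ) : ℝ)))^2
        = C^(2*(i:ℕ)+r+1) / A^(2*r) := by
      rw [mul_pow, ← Real.rpow_natCast (A ^ (-(r:ℝ))) 2, ← Real.rpow_mul hApos.le,
        ← Real.rpow_natCast (C ^ _) 2, ← Real.rpow_mul hCpos.le]
      rw [show -(r:ℝ) * (2:ℕ) = -((2*r : ℕ) : ℝ) by push_cast; ring,
        show (((r:ℝ)+1)/2 + ((i:ℕ):ℝ)) * (2:ℕ) = ((2*(i:ℕ)+r+1 : ℕ) : ℝ) by push_cast; ring]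
      rw [Real.rpow_neg hApos.le, Real.rpow_natCast, Real.rpow_natCast]
      rw [div_eq_mul_inv, mul_comm]
    have h3 : Real.sqrt (a i) ≤
        Real.sqrt ((A ^ (-(r : ℝ)) * C ^ (((r : ℝ) + 1) / 2 + ((i : ℕ) : ℝ)))^2) :=
      Real.sqrt_le_sqrt (by rw [hrw]; exact h1)
    rwa [Real.sqrt_sq hRnn] at h3
  · have hrw : (C ^ (((r:ℝ)-1)/2))^2 = C ^ (r-1 : ℕ) := by
      rw [← Real.rpow_natCast (C ^ _) 2, ← Real.rpow_mul hCpos.le,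
        show (((r:ℝ)-1)/2) * (2:ℕ) = ((r-1 : ℕ) : ℝ) by
          rw [Nat.cast_sub hr]; push_cast; ring]
      rw [Real.rpow_natCast]
    have h3 : Real.sqrt (a ⟨r-1, Nat.sub_lt hr Nat.one_pos⟩) ≤
        Real.sqrt ((C ^ (((r:ℝ)-1)/2))^2) :=
      Real.sqrt_le_sqrt (by rw [hrw]; exact hbound_last)
    rwa [Real.sqrt_sq (Real.rpow_nonneg hCpos.le _)] at h3
end

section
/- Let C be a positive number with C ≥ √r·|α|. For any h∈ℋ(f,e) such that the operator norm |f|_h ≤ C, one has |α|^r·(C+1)^{−2r} ≤ |e_i|_h ≤ |α|^{−r}·(C+1)^{2r} for every i=0,…,r−1. -/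
/-- two-sided bounds for the norms of the basis vectors when the operator
norm of `f` is bounded by `C`. -/
theorem basis_norm_two_sided_bounds
    (r : ℕ) (hr : 0 < r) (V : Type*) [AddCommGroup V] [Module ℂ V]
    (e : Module.Basis (Fin r) ℂ V) (α : ℂ) (hα : α ≠ 0)
    (f : V →ₗ[ℂ] V)
    (hf : ∀ (i : Fin r) (h : (i : ℕ) + 1 < r), f (e i) = e ⟨(i : ℕ) + 1, h⟩)
    (hlast : f (e ⟨r - 1, Nat.sub_lt hr Nat.one_pos⟩) = α ^ r • e ⟨0, hr⟩)
    (C : ℝ) (hCpos : 0 < C) (hC : Real.sqrt r * ‖α‖ ≤ C)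
    (h : V → V → ℂ) (hMet : HermMetric r e h)
    (hfC : ∀ x : V, (h (f x) (f x)).re ≤ C ^ 2 * (h x x).re) :
    ∀ i : Fin r,
      ‖α‖ ^ (r : ℝ) * (C + 1) ^ (-(2 * (r : ℝ))) ≤ Real.sqrt (h (e i) (e i)).re ∧
      Real.sqrt (h (e i) (e i)).re ≤ ‖α‖ ^ (-(r : ℝ)) * (C + 1) ^ (2 * (r : ℝ)) := by
  set A := ‖α‖ with hAdef
  have hA0 : 0 < A := norm_pos_iff.mpr hα
  have hAC : A ≤ C := by
    have h1 : (1:ℝ) ≤ Real.sqrt r := by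
      rw [show (1:ℝ) = Real.sqrt 1 by simp]
      exact Real.sqrt_le_sqrt (by exact_mod_cast hr)
    nlinarith
  set d : Fin r → ℝ := fun i => (h (e i) (e i)).re with hddef
  have hdpos : ∀ i, 0 < d i := fun i => hMet.pos_def (e i) (e.ne_zero i)
  have hreal : ∀ i, h (e i) (e i) = ((d i : ℝ) : ℂ) := by
    intro i
    exact (Complex.conj_eq_iff_re.mp (hMet.conj_symm (e i) (e i)).symm).symm
  have hprod : ∏ i : Fin r, d i = 1 := by
    have h1 : ((∏ i : Fin r, d i : ℝ) : ℂ) = ∏ i : Fin r, h (e i) (e i) := by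
      rw [Complex.ofReal_prod]
      exact Finset.prod_congr rfl fun i _ => (hreal i).symm
    have h2 := h1.trans hMet.prod_one
    exact_mod_cast h2
  have hsr : ∀ (c : ℂ) (x y : V), h x (c • y) = c * h x y := by
    intro c x y
    calc h x (c • y) = (starRingEnd ℂ) (h (c • y) x) := hMet.conj_symm (c • y) x
      _ = (starRingEnd ℂ) ((starRingEnd ℂ) c * h y x) := by rw [hMet.smul_left]
      _ = c * (starRingEnd ℂ) (h y x) := by rw [map_mul, Complex.conj_conj]
      _ = c * h x y := by rw [hMet.conj_symm x y, Complex.conj_conj]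
  -- step inequality
  have hstep : ∀ (n : ℕ) (hn : n + 1 < r),
      d ⟨n + 1, hn⟩ ≤ C ^ 2 * d ⟨n, by omega⟩ := by
    intro n hn
    have h1 := hfC (e ⟨n, by omega⟩)
    rwa [hf ⟨n, by omega⟩ hn] at h1
  -- wrap-around inequality
  have hwrap : A ^ (2 * r) * d ⟨0, hr⟩ ≤ C ^ 2 * d ⟨r - 1, Nat.sub_lt hr Nat.one_pos⟩ := by
    have key := hfC (e ⟨r - 1, Nat.sub_lt hr Nat.one_pos⟩)
    rw [hlast, hMet.smul_left, hsr, hreal] at key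
    have h1 : (starRingEnd ℂ) (α ^ r) * (α ^ r * ((d ⟨0, hr⟩ : ℝ) : ℂ))
        = ((A ^ (2 * r) * d ⟨0, hr⟩ : ℝ) : ℂ) := by
      rw [← mul_assoc, mul_comm ((starRingEnd ℂ) (α ^ r)) (α ^ r), Complex.mul_conj]
      rw [← Complex.sq_norm, norm_pow]
      push_cast
      ring
    rw [h1, Complex.ofReal_re] at key
    exact key
  -- chain inequality
  have hchain : ∀ (k n : ℕ) (hkn : n + k < r),
      d ⟨n + k, hkn⟩ ≤ C ^ (2 * k) * d ⟨n, by omega⟩ := by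
    intro k
    induction k with
    | zero => intro n hkn; simp
    | succ k ih =>
      intro n hkn
      have h2 := ih n (by omega)
      have h1 := hstep (n + k) hkn
      have hexp : 2 * k + 2 = 2 * (k + 1) := by ring
      calc d ⟨n + (k + 1), hkn⟩ ≤ C ^ 2 * d ⟨n + k, by omega⟩ := h1
        _ ≤ C ^ 2 * (C ^ (2 * k) * d ⟨n, by omega⟩) :=
            mul_le_mul_of_nonneg_left h2 (sq_nonneg C)
        _ = C ^ (2 * (k + 1)) * d ⟨n, by omega⟩ := by
            rw [← mul_assoc, ← pow_add, show 2 + 2 * k = 2 * (k + 1) from by ring]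
  -- around-the-cycle inequality
  have haround : ∀ i j : Fin r, (i : ℕ) < (j : ℕ) →
      A ^ (2 * r) * d i ≤ C ^ (2 * (r + (i : ℕ) - (j : ℕ))) * d j := by
    intro i j hij
    have hjr : (j : ℕ) < r := j.isLt
    have hi : d i ≤ C ^ (2 * (i : ℕ)) * d ⟨0, hr⟩ := by
      have h1 := hchain i.val 0 (by omega)
      rwa [show (⟨0 + i.val, by omega⟩ : Fin r) = i from by apply Fin.ext; simp only [Fin.val_mk]; omega] at h1
    have h3 : d ⟨r - 1, Nat.sub_lt hr Nat.one_pos⟩ ≤ C ^ (2 * (r - 1 - (j : ℕ))) * d j := by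
      have h1 := hchain (r - 1 - j.val) j.val (by omega)
      rwa [show (⟨j.val + (r - 1 - j.val), by omega⟩ : Fin r)
            = ⟨r - 1, Nat.sub_lt hr Nat.one_pos⟩ from by apply Fin.ext; simp only [Fin.val_mk]; omega,
          show (⟨j.val, by omega⟩ : Fin r) = j from Fin.ext rfl] at h1
    calc A ^ (2 * r) * d i
        ≤ A ^ (2 * r) * (C ^ (2 * (i : ℕ)) * d ⟨0, hr⟩) :=
          mul_le_mul_of_nonneg_left hi (by positivity)
      _ = C ^ (2 * (i : ℕ)) * (A ^ (2 * r) * d ⟨0, hr⟩) := by ring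
      _ ≤ C ^ (2 * (i : ℕ)) * (C ^ 2 * d ⟨r - 1, Nat.sub_lt hr Nat.one_pos⟩) :=
          mul_le_mul_of_nonneg_left hwrap (by positivity)
      _ ≤ C ^ (2 * (i : ℕ)) * (C ^ 2 * (C ^ (2 * (r - 1 - (j : ℕ))) * d j)) := by
          have h4 := mul_le_mul_of_nonneg_left h3 (sq_nonneg C)
          exact mul_le_mul_of_nonneg_left h4 (by positivity)
      _ = C ^ (2 * (r + (i : ℕ) - (j : ℕ))) * d j := by
          rw [show C ^ (2 * (i : ℕ)) * (C ^ 2 * (C ^ (2 * (r - 1 - (j : ℕ))) * d j))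
              = C ^ (2 * (i : ℕ)) * C ^ 2 * C ^ (2 * (r - 1 - (j : ℕ))) * d j from by ring,
            ← pow_add, ← pow_add,
            show 2 * (i : ℕ) + 2 + 2 * (r - 1 - (j : ℕ)) = 2 * (r + (i : ℕ) - (j : ℕ))
              from by omega]
  have hne : Nonempty (Fin r) := ⟨⟨0, hr⟩⟩
  have hexU : ∃ j : Fin r, d j ≤ 1 := by
    by_contra hcon
    push_neg at hcon
    have h1 : ∏ _i : Fin r, (1 : ℝ) < ∏ i : Fin r, d i :=
      Finset.prod_lt_prod_of_nonempty (by simp) (fun i _ => hcon i) Finset.univ_nonempty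
    rw [Finset.prod_const_one, hprod] at h1
    exact lt_irrefl 1 h1
  have hexL : ∃ j : Fin r, 1 ≤ d j := by
    by_contra hcon
    push_neg at hcon
    have h1 : ∏ i : Fin r, d i < ∏ _i : Fin r, (1 : ℝ) :=
      Finset.prod_lt_prod_of_nonempty (fun i _ => hdpos i) (fun i _ => hcon i)
        Finset.univ_nonempty
    rw [Finset.prod_const_one, hprod] at h1
    exact lt_irrefl 1 h1
  have hpowle : ∀ k : ℕ, k ≤ 4 * r → C ^ k ≤ (C + 1) ^ (4 * r) := fun k hk =>
    (pow_le_pow_left₀ hCpos.le (by linarith) k).trans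
      (pow_le_pow_right₀ (by linarith) hk)
  have hA2C : A ^ (2 * r) ≤ C ^ (2 * r) := pow_le_pow_left₀ hA0.le hAC _
  -- key upper bound
  have keyU : ∀ i : Fin r, A ^ (2 * r) * d i ≤ (C + 1) ^ (4 * r) := by
    intro i
    obtain ⟨j, hj⟩ := hexU
    rcases le_or_gt (j : ℕ) (i : ℕ) with hle | hlt
    · have h1 := hchain (i.val - j.val) j.val (by omega)
      rw [show (⟨j.val + (i.val - j.val), by omega⟩ : Fin r) = i from by apply Fin.ext; simp only [Fin.val_mk]; omega,
        show (⟨j.val, by omega⟩ : Fin r) = j from Fin.ext rfl] at h1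
      calc A ^ (2 * r) * d i
          ≤ C ^ (2 * r) * (C ^ (2 * (i.val - j.val)) * d j) :=
            mul_le_mul hA2C h1 (hdpos i).le (by positivity)
        _ = C ^ (2 * r + 2 * (i.val - j.val)) * d j := by rw [← mul_assoc, ← pow_add]
        _ ≤ C ^ (2 * r + 2 * (i.val - j.val)) * 1 :=
            mul_le_mul_of_nonneg_left hj (by positivity)
        _ ≤ (C + 1) ^ (4 * r) := by
            rw [mul_one]; exact hpowle _ (by have := i.isLt; omega)
    · calc A ^ (2 * r) * d i ≤ C ^ (2 * (r + i.val - j.val)) * d j := haround i j hlt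
        _ ≤ C ^ (2 * (r + i.val - j.val)) * 1 :=
            mul_le_mul_of_nonneg_left hj (by positivity)
        _ ≤ (C + 1) ^ (4 * r) := by
            rw [mul_one]; exact hpowle _ (by have := j.isLt; omega)
  -- key lower bound
  have keyL : ∀ i : Fin r, A ^ (2 * r) ≤ (C + 1) ^ (4 * r) * d i := by
    intro i
    obtain ⟨j, hj⟩ := hexL
    rcases le_or_gt (i : ℕ) (j : ℕ) with hle | hlt
    · have h1 := hchain (j.val - i.val) i.val (by omega)
      rw [show (⟨i.val + (j.val - i.val), by omega⟩ : Fin r) = j from by apply Fin.ext; simp only [Fin.val_mk]; omega,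
        show (⟨i.val, by omega⟩ : Fin r) = i from Fin.ext rfl] at h1
      calc A ^ (2 * r) = A ^ (2 * r) * 1 := (mul_one _).symm
        _ ≤ A ^ (2 * r) * d j := mul_le_mul_of_nonneg_left hj (by positivity)
        _ ≤ A ^ (2 * r) * (C ^ (2 * (j.val - i.val)) * d i) :=
            mul_le_mul_of_nonneg_left h1 (by positivity)
        _ ≤ C ^ (2 * r) * (C ^ (2 * (j.val - i.val)) * d i) :=
            mul_le_mul_of_nonneg_right hA2C (mul_nonneg (by positivity) (hdpos i).le)
        _ = C ^ (2 * r + 2 * (j.val - i.val)) * d i := by rw [← mul_assoc, ← pow_add]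
        _ ≤ (C + 1) ^ (4 * r) * d i :=
            mul_le_mul_of_nonneg_right (hpowle _ (by have := j.isLt; omega)) (hdpos i).le
    · calc A ^ (2 * r) = A ^ (2 * r) * 1 := (mul_one _).symm
        _ ≤ A ^ (2 * r) * d j := mul_le_mul_of_nonneg_left hj (by positivity)
        _ ≤ C ^ (2 * (r + j.val - i.val)) * d i := haround j i hlt
        _ ≤ (C + 1) ^ (4 * r) * d i :=
            mul_le_mul_of_nonneg_right (hpowle _ (by have := i.isLt; omega)) (hdpos i).le
  -- conclude
  intro i
  have hCB : (0:ℝ) < C + 1 := by linarith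
  have hrw1 : A ^ ((r : ℝ)) * (C + 1) ^ (-(2 * (r : ℝ))) = A ^ r * ((C + 1) ^ (2 * r))⁻¹ := by
    rw [Real.rpow_natCast]
    congr 1
    rw [← Real.rpow_natCast (C + 1) (2 * r), ← Real.rpow_neg hCB.le]
    congr 1
    push_cast
    ring
  have hrw2 : A ^ (-(r : ℝ)) * (C + 1) ^ (2 * (r : ℝ)) = (A ^ r)⁻¹ * (C + 1) ^ (2 * r) := by
    rw [← Real.rpow_natCast A r, ← Real.rpow_neg hA0.le]
    congr 1
    rw [← Real.rpow_natCast (C + 1) (2 * r)]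
    congr 1
    push_cast
    ring
  constructor
  · rw [hrw1, Real.le_sqrt (by positivity) (hdpos i).le]
    have hsq : (A ^ r * ((C + 1) ^ (2 * r))⁻¹) ^ 2 = A ^ (2 * r) / (C + 1) ^ (4 * r) := by
      rw [mul_pow, ← pow_mul, inv_pow, ← pow_mul,
        show r * 2 = 2 * r from by ring, show 2 * r * 2 = 4 * r from by ring,
        div_eq_mul_inv]
    rw [hsq, div_le_iff₀ (by positivity)]
    have := keyL i
    linarith [keyL i]
  · rw [hrw2]
    have hdle : d i ≤ ((A ^ r)⁻¹ * (C + 1) ^ (2 * r)) ^ 2 := by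
      have hsq : ((A ^ r)⁻¹ * (C + 1) ^ (2 * r)) ^ 2 = (C + 1) ^ (4 * r) / A ^ (2 * r) := by
        rw [mul_pow, inv_pow, ← pow_mul, ← pow_mul,
          show r * 2 = 2 * r from by ring, show 2 * r * 2 = 4 * r from by ring,
          div_eq_mul_inv]
        ring
      rw [hsq, le_div_iff₀ (by positivity)]
      linarith [keyU i]
    calc Real.sqrt (d i) ≤ Real.sqrt (((A ^ r)⁻¹ * (C + 1) ^ (2 * r)) ^ 2) :=
          Real.sqrt_le_sqrt hdle
      _ = (A ^ r)⁻¹ * (C + 1) ^ (2 * r) := Real.sqrt_sq (by positivity)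
end

section
/- Let C be a positive number with C ≥ √r·|α|. For any h_1,h_2∈ℋ(f,e) such that |f|_{h_1} ≤ C and |f|_{h_2} ≤ C, one has |α|^{2r}·(C+1)^{−4r} ≤ |e_i|_{h_1}/|e_i|_{h_2} ≤ |α|^{−2r}·(C+1)^{4r} for every i=0,…,r−1. -/
lemma herm_aux
    (r : ℕ) (hr : 0 < r) (V : Type*) [AddCommGroup V] [Module ℂ V]
    (e : Module.Basis (Fin r) ℂ V) (α : ℂ) (hα : α ≠ 0)
    (f : V →ₗ[ℂ] V)
    (hf : ∀ (i : Fin r) (h : (i : ℕ) + 1 < r), f (e i) = e ⟨(i : ℕ) + 1, h⟩)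
    (hlast : f (e ⟨r - 1, Nat.sub_lt hr Nat.one_pos⟩) = α ^ r • e ⟨0, hr⟩)
    (C : ℝ) (hCpos : 0 < C)
    (h : V → V → ℂ) (hMet : HermMetric r e h)
    (hfC : ∀ x : V, (h (f x) (f x)).re ≤ C ^ 2 * (h x x).re) :
    ∀ i : Fin r,
      ((C + 1) ^ (4 * r) / ‖α‖ ^ (2 * r))⁻¹ ≤ (h (e i) (e i)).re ∧
      (h (e i) (e i)).re ≤ (C + 1) ^ (4 * r) / ‖α‖ ^ (2 * r) := by
  set lam : Fin r → ℝ := fun i => (h (e i) (e i)).re with hlam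
  have hpos : ∀ i, 0 < lam i := fun i => hMet.pos_def (e i) (e.ne_zero i)
  have hreal : ∀ x : V, h x x = ((h x x).re : ℂ) := by
    intro x
    have hc := (hMet.conj_symm x x).symm
    have him : (h x x).im = 0 := Complex.conj_eq_iff_im.mp hc
    exact Complex.ext (by simp) (by simp [him])
  have hprod : ∏ i, lam i = 1 := by
    have : ((∏ i, lam i : ℝ) : ℂ) = 1 := by
      push_cast
      rw [← hMet.prod_one]
      exact Finset.prod_congr rfl fun i _ => (hreal (e i)).symm
    exact_mod_cast this
  set a : ℝ := ‖α‖ ^ (2 * r) with ha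
  have habs : 0 < ‖α‖ := norm_pos_iff.mpr hα
  have hapos : 0 < a := by positivity
  -- step inequality
  have step : ∀ (n : ℕ) (hn : n + 1 < r),
      lam ⟨n + 1, hn⟩ ≤ C ^ 2 * lam ⟨n, by omega⟩ := by
    intro n hn
    have := hfC (e ⟨n, by omega⟩)
    rwa [hf ⟨n, by omega⟩ hn] at this
  have chain : ∀ (n k : ℕ) (hkn : k + n < r),
      lam ⟨k + n, hkn⟩ ≤ C ^ (2 * n) * lam ⟨k, by omega⟩ := by
    intro n
    induction n with
    | zero => intro k hk; simp
    | succ n ih =>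
      intro k hkn
      have h1 : lam ⟨k + n + 1, by omega⟩ ≤ C ^ 2 * lam ⟨k + n, by omega⟩ :=
        step (k + n) (by omega)
      have h2 := ih k (by omega)
      calc lam ⟨k + (n + 1), hkn⟩ = lam ⟨k + n + 1, by omega⟩ := rfl
        _ ≤ C ^ 2 * lam ⟨k + n, by omega⟩ := h1
        _ ≤ C ^ 2 * (C ^ (2 * n) * lam ⟨k, by omega⟩) := by
            apply mul_le_mul_of_nonneg_left h2 (by positivity)
        _ = C ^ (2 * (n + 1)) * lam ⟨k, by omega⟩ := by ring
  -- wrap inequality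
  have wrap : a * lam ⟨0, hr⟩ ≤ C ^ 2 * lam ⟨r - 1, Nat.sub_lt hr Nat.one_pos⟩ := by
    have hw := hfC (e ⟨r - 1, Nat.sub_lt hr Nat.one_pos⟩)
    rw [hlast] at hw
    have hsq : h (α ^ r • e ⟨0, hr⟩) (α ^ r • e ⟨0, hr⟩)
        = (Complex.normSq (α ^ r) : ℂ) * ((h (e ⟨0, hr⟩) (e ⟨0, hr⟩)).re : ℂ) := by
      rw [hMet.smul_left, hMet.conj_symm, hMet.smul_left]
      rw [hreal (e ⟨0, hr⟩)]
      simp [Complex.normSq_eq_conj_mul_self]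
      ring
    rw [hsq] at hw
    have hnsq : Complex.normSq (α ^ r) = a := by
      rw [ha, ← Complex.sq_norm, norm_pow, ← pow_mul]
      ring_nf
    have : (((Complex.normSq (α ^ r) : ℂ)) * ((lam ⟨0, hr⟩ : ℝ) : ℂ)).re
        = a * lam ⟨0, hr⟩ := by
      rw [hnsq]; push_cast; simp
    rw [this] at hw
    exact hw
  set A : ℝ := (C + 1) ^ (4 * r) / a with hA
  have hApos : 0 < A := by positivity
  have key : ∀ i j : Fin r, lam i ≤ A * lam j := by
    intro i j
    have c1 : lam i ≤ C ^ (2 * i.val) * lam ⟨0, hr⟩ := by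
      have := chain i.val 0 (by omega)
      have he : (⟨0 + i.val, by omega⟩ : Fin r) = i := Fin.ext (Nat.zero_add _)
      rwa [he] at this
    have c2 : lam ⟨0, hr⟩ ≤ C ^ 2 / a * lam ⟨r - 1, Nat.sub_lt hr Nat.one_pos⟩ := by
      rw [div_mul_eq_mul_div, le_div_iff₀ hapos, mul_comm]
      exact wrap
    have c3 : lam ⟨r - 1, Nat.sub_lt hr Nat.one_pos⟩ ≤ C ^ (2 * (r - 1 - j.val)) * lam j := by
      have := chain (r - 1 - j.val) j.val (by omega)
      have he : (⟨j.val + (r - 1 - j.val), by omega⟩ : Fin r)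
          = ⟨r - 1, Nat.sub_lt hr Nat.one_pos⟩ :=
        Fin.ext (show j.val + (r - 1 - j.val) = r - 1 by omega)
      have he2 : (⟨j.val, by omega⟩ : Fin r) = j := Fin.ext rfl
      rwa [he, he2] at this
    have hCm : C ^ (2 * i.val + 2 + 2 * (r - 1 - j.val)) ≤ (C + 1) ^ (4 * r) := by
      calc C ^ (2 * i.val + 2 + 2 * (r - 1 - j.val))
          ≤ (C + 1) ^ (2 * i.val + 2 + 2 * (r - 1 - j.val)) :=
            pow_le_pow_left₀ hCpos.le (by linarith) _
        _ ≤ (C + 1) ^ (4 * r) := by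
            apply pow_le_pow_right₀ (by linarith)
            have := i.isLt; omega
    calc lam i ≤ C ^ (2 * i.val) * lam ⟨0, hr⟩ := c1
      _ ≤ C ^ (2 * i.val) * (C ^ 2 / a * lam ⟨r - 1, Nat.sub_lt hr Nat.one_pos⟩) :=
          mul_le_mul_of_nonneg_left c2 (by positivity)
      _ ≤ C ^ (2 * i.val) * (C ^ 2 / a * (C ^ (2 * (r - 1 - j.val)) * lam j)) := by
          apply mul_le_mul_of_nonneg_left _ (by positivity)
          exact mul_le_mul_of_nonneg_left c3 (by positivity)
      _ = C ^ (2 * i.val + 2 + 2 * (r - 1 - j.val)) / a * lam j := by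
          rw [pow_add, pow_add]; field_simp
      _ ≤ A * lam j :=
          mul_le_mul_of_nonneg_right ((div_le_div_iff_of_pos_right hapos).mpr hCm) (hpos j).le
  -- absolute bounds
  intro i
  have hupper : lam i ≤ A := by
    have hpow : (lam i) ^ r ≤ A ^ r := by
      calc (lam i) ^ r = ∏ _j : Fin r, lam i := by
            simp [Finset.prod_const, Finset.card_fin]
        _ ≤ ∏ j, (A * lam j) :=
            Finset.prod_le_prod (fun j _ => (hpos i).le) (fun j _ => key i j)
        _ = A ^ r * ∏ j, lam j := by
            rw [Finset.prod_mul_distrib]; simp [Finset.prod_const, Finset.card_fin]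
        _ = A ^ r := by rw [hprod]; ring
    exact le_of_pow_le_pow_left₀ hr.ne' hApos.le hpow
  have hlower : A⁻¹ ≤ lam i := by
    have hpow : (1 : ℝ) ≤ (A * lam i) ^ r := by
      calc (1 : ℝ) = ∏ j, lam j := hprod.symm
        _ ≤ ∏ _j : Fin r, (A * lam i) :=
            Finset.prod_le_prod (fun j _ => (hpos j).le) (fun j _ => key j i)
        _ = (A * lam i) ^ r := by simp [Finset.prod_const, Finset.card_fin]
    have h1 : (1 : ℝ) ≤ A * lam i := by
      rw [← one_pow r] at hpow
      exact le_of_pow_le_pow_left₀ hr.ne' (mul_nonneg hApos.le (hpos i).le) hpow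
    rw [inv_eq_one_div, div_le_iff₀ hApos]
    nlinarith [h1]
  exact ⟨hlower, hupper⟩

/-- comparison of the norms of basis vectors for two metrics whose
operator norms of `f` are bounded by `C`. -/
theorem basis_norm_ratio_bounds
    (r : ℕ) (hr : 0 < r) (V : Type*) [AddCommGroup V] [Module ℂ V]
    (e : Module.Basis (Fin r) ℂ V) (α : ℂ) (hα : α ≠ 0)
    (f : V →ₗ[ℂ] V)
    (hf : ∀ (i : Fin r) (h : (i : ℕ) + 1 < r), f (e i) = e ⟨(i : ℕ) + 1, h⟩)
    (hlast : f (e ⟨r - 1, Nat.sub_lt hr Nat.one_pos⟩) = α ^ r • e ⟨0, hr⟩)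
    (C : ℝ) (hCpos : 0 < C) (hC : Real.sqrt r * ‖α‖ ≤ C)
    (h₁ h₂ : V → V → ℂ) (hMet₁ : HermMetric r e h₁) (hMet₂ : HermMetric r e h₂)
    (hfC₁ : ∀ x : V, (h₁ (f x) (f x)).re ≤ C ^ 2 * (h₁ x x).re)
    (hfC₂ : ∀ x : V, (h₂ (f x) (f x)).re ≤ C ^ 2 * (h₂ x x).re) :
    ∀ i : Fin r,
      ‖α‖ ^ (2 * (r : ℝ)) * (C + 1) ^ (-(4 * (r : ℝ))) ≤
        Real.sqrt (h₁ (e i) (e i)).re / Real.sqrt (h₂ (e i) (e i)).re ∧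
      Real.sqrt (h₁ (e i) (e i)).re / Real.sqrt (h₂ (e i) (e i)).re ≤
        ‖α‖ ^ (-(2 * (r : ℝ))) * (C + 1) ^ (4 * (r : ℝ)) := by
  intro i
  obtain ⟨l1, u1⟩ := herm_aux r hr V e α hα f hf hlast C hCpos h₁ hMet₁ hfC₁ i
  obtain ⟨l2, u2⟩ := herm_aux r hr V e α hα f hf hlast C hCpos h₂ hMet₂ hfC₂ i
  set A : ℝ := (C + 1) ^ (4 * r) / ‖α‖ ^ (2 * r) with hA
  have habs : 0 < ‖α‖ := norm_pos_iff.mpr hα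
  have hApos : 0 < A := by positivity
  set L := Real.sqrt (h₁ (e i) (e i)).re with hL
  set M := Real.sqrt (h₂ (e i) (e i)).re with hM
  have hMpos : 0 < M :=
    Real.sqrt_pos.mpr (hMet₂.pos_def (e i) (e.ne_zero i))
  have sA : Real.sqrt A * Real.sqrt A = A := Real.mul_self_sqrt hApos.le
  have sApos : 0 < Real.sqrt A := Real.sqrt_pos.mpr hApos
  have hLle : L ≤ Real.sqrt A := Real.sqrt_le_sqrt u1
  have hMle : M ≤ Real.sqrt A := Real.sqrt_le_sqrt u2
  have hLge : (Real.sqrt A)⁻¹ ≤ L := by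
    rw [← Real.sqrt_inv]; exact Real.sqrt_le_sqrt l1
  have hMge : (Real.sqrt A)⁻¹ ≤ M := by
    rw [← Real.sqrt_inv]; exact Real.sqrt_le_sqrt l2
  have erw1 : ‖α‖ ^ (2 * (r : ℝ)) = ‖α‖ ^ (2 * r) := by
    rw [show (2 * (r : ℝ)) = ((2 * r : ℕ) : ℝ) by push_cast; ring, Real.rpow_natCast]
  have erw2 : (C + 1) ^ (-(4 * (r : ℝ))) = ((C + 1) ^ (4 * r) : ℝ)⁻¹ := by
    rw [show (4 * (r : ℝ)) = ((4 * r : ℕ) : ℝ) by push_cast; ring,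
      Real.rpow_neg (by linarith), Real.rpow_natCast]
  have erw3 : ‖α‖ ^ (-(2 * (r : ℝ))) = (‖α‖ ^ (2 * r) : ℝ)⁻¹ := by
    rw [show (2 * (r : ℝ)) = ((2 * r : ℕ) : ℝ) by push_cast; ring,
      Real.rpow_neg habs.le, Real.rpow_natCast]
  have erw4 : (C + 1) ^ (4 * (r : ℝ)) = ((C + 1) ^ (4 * r) : ℝ) := by
    rw [show (4 * (r : ℝ)) = ((4 * r : ℕ) : ℝ) by push_cast; ring, Real.rpow_natCast]
  constructor
  · rw [erw1, erw2]
    have heq : ‖α‖ ^ (2 * r) * ((C + 1) ^ (4 * r) : ℝ)⁻¹ = A⁻¹ := by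
      rw [hA]; field_simp
    rw [heq, le_div_iff₀ hMpos]
    calc A⁻¹ * M ≤ A⁻¹ * Real.sqrt A :=
          mul_le_mul_of_nonneg_left hMle (inv_nonneg.mpr hApos.le)
      _ = (Real.sqrt A)⁻¹ := by
          field_simp
          exact Real.sq_sqrt hApos.le
      _ ≤ L := hLge
  · rw [erw3, erw4]
    have heq : (‖α‖ ^ (2 * r) : ℝ)⁻¹ * ((C + 1) ^ (4 * r) : ℝ) = A := by
      rw [hA]; field_simp
    rw [heq, div_le_iff₀ hMpos]
    calc L ≤ Real.sqrt A := hLle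
      _ = A * (Real.sqrt A)⁻¹ := by
          field_simp
          exact Real.sq_sqrt hApos.le
      _ ≤ A * M := mul_le_mul_of_nonneg_left hMge hApos.le
end

section
/- Assume r>1 and let 0≤ε≤1. Let h∈ℋ(f,e); by G_r-invariance the value b(h):=h(v_i,v_i) is independent of i. Suppose |h(v_i,v_j)| ≤ ε·b(h) for all i≠j. Let 0<δ<1 satisfy (r−1)ε<δ, and set C_δ=(1−δ)^{−1}(r−1). Then |log(b(h)/b(h_can))| ≤ C_δ·ε, and for every j=0,…,r−1 one has |log(h(e_j,e_j)/h_can(e_j,e_j))| ≤ 2C_δ·ε. -/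
namespace HermMetric
variable {r : ℕ} {V : Type*} [AddCommGroup V] [Module ℂ V] {e : Module.Basis (Fin r) ℂ V}
  {h : V → V → ℂ}

lemma zero_left (hm : HermMetric r e h) (y : V) : h 0 y = 0 := by
  have h0 := hm.add_left 0 0 y
  rw [add_zero] at h0
  linear_combination -h0

lemma sum_left (hm : HermMetric r e h) {ι : Type*} (s : Finset ι) (x : ι → V) (y : V) :
    h (∑ i ∈ s, x i) y = ∑ i ∈ s, h (x i) y := by
  classical
  induction s using Finset.cons_induction with
  | empty => simpa using hm.zero_left y
  | cons a s ha ih => rw [Finset.sum_cons, Finset.sum_cons, hm.add_left, ih]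

lemma smul_right (hm : HermMetric r e h) (c : ℂ) (x y : V) :
    h x (c • y) = c * h x y := by
  rw [hm.conj_symm, hm.smul_left, map_mul, Complex.conj_conj, ← hm.conj_symm]

lemma sum_right (hm : HermMetric r e h) {ι : Type*} (s : Finset ι) (x : V) (y : ι → V) :
    h x (∑ i ∈ s, y i) = ∑ i ∈ s, h x (y i) := by
  rw [hm.conj_symm, hm.sum_left, map_sum]
  exact Finset.sum_congr rfl fun i _ => (hm.conj_symm _ _).symm

lemma real_diag (hm : HermMetric r e h) (x : V) : h x x = ((h x x).re : ℂ) :=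
  ((Complex.conj_eq_iff_re).mp (hm.conj_symm x x).symm).symm

end HermMetric

namespace HermMetric
variable {r : ℕ} {V : Type*} [AddCommGroup V] [Module ℂ V] {e : Module.Basis (Fin r) ℂ V}
  {h : V → V → ℂ}

lemma expand (hm : HermMetric r e h) {τ α : ℂ} (hτ1 : ‖τ‖ = 1) (hα : α ≠ 0)
    {v : Fin r → V}
    (hv : ∀ i : Fin r, v i =
      ∑ j : Fin r, (τ ^ (-((i : ℕ) : ℤ) * ((j : ℕ) : ℤ)) * α ^ (-((j : ℕ) : ℤ))) • e j)
    (i j : Fin r) :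
    h (v i) (v j) = ∑ m : Fin r,
      τ ^ ((((i : ℕ) : ℤ) - ((j : ℕ) : ℤ)) * ((m : ℕ) : ℤ)) *
        (((Complex.normSq α : ℝ) : ℂ) ^ (-((m : ℕ) : ℤ)) * h (e m) (e m)) := by
  have hτ0 : τ ≠ 0 := by
    intro h0; rw [h0] at hτ1; simp at hτ1
  have hconj : (starRingEnd ℂ) τ = τ⁻¹ := by
    rw [Complex.inv_eq_conj (by simpa using hτ1)]
  rw [hv i, hm.sum_left]
  refine Finset.sum_congr rfl fun m _ => ?_
  rw [hm.smul_left, hv j, hm.sum_right, Finset.sum_eq_single m]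
  · rw [hm.smul_right]
    have e1 : (starRingEnd ℂ) (α ^ (-((m:ℕ):ℤ))) * α ^ (-((m:ℕ):ℤ))
        = ((Complex.normSq α : ℝ) : ℂ) ^ (-((m:ℕ):ℤ)) := by
      rw [← Complex.normSq_eq_conj_mul_self, map_zpow₀ Complex.normSq,
        Complex.ofReal_zpow]
    have e2 : (starRingEnd ℂ) (τ ^ (-((i:ℕ):ℤ) * ((m:ℕ):ℤ)))
        = τ ^ (((i:ℕ):ℤ) * ((m:ℕ):ℤ)) := by
      rw [map_zpow₀, hconj, inv_zpow, ← zpow_neg, neg_mul, neg_neg]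
    have e3 : τ ^ (((i:ℕ):ℤ) * ((m:ℕ):ℤ)) * τ ^ (-((j:ℕ):ℤ) * ((m:ℕ):ℤ))
        = τ ^ ((((i : ℕ) : ℤ) - ((j : ℕ) : ℤ)) * ((m : ℕ) : ℤ)) := by
      rw [← zpow_add₀ hτ0]; ring_nf
    rw [map_mul, e2]
    calc τ ^ (((i:ℕ):ℤ) * ((m:ℕ):ℤ)) * (starRingEnd ℂ) (α ^ (-((m:ℕ):ℤ))) *
          (τ ^ (-((j:ℕ):ℤ) * ((m:ℕ):ℤ)) * α ^ (-((m:ℕ):ℤ)) * h (e m) (e m))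
        = (τ ^ (((i:ℕ):ℤ) * ((m:ℕ):ℤ)) * τ ^ (-((j:ℕ):ℤ) * ((m:ℕ):ℤ))) *
          (((starRingEnd ℂ) (α ^ (-((m:ℕ):ℤ))) * α ^ (-((m:ℕ):ℤ))) * h (e m) (e m)) := by
            ring
      _ = _ := by rw [e1, e3]
  · intro n _ hn
    rw [hm.smul_right, hm.orthogonal m n (fun hc => hn hc.symm)]
    ring
  · intro hmem; exact absurd (Finset.mem_univ m) hmem

end HermMetric

lemma sum_zpow_eq_zero {r : ℕ} (hr : 0 < r) {τ : ℂ}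
    (hτ : τ = Complex.exp (2 * Real.pi * Complex.I / r)) {n : ℤ}
    (hn : ¬ ((r : ℤ) ∣ n)) : ∑ j : Fin r, τ ^ (((j:ℕ):ℤ) * n) = 0 := by
  have hprim : IsPrimitiveRoot τ r := hτ ▸ Complex.isPrimitiveRoot_exp r hr.ne'
  have hx1 : τ ^ n ≠ 1 := fun hc => hn ((hprim.zpow_eq_one_iff_dvd n).mp hc)
  have hxr : (τ ^ n) ^ r = 1 := by
    rw [← zpow_natCast (τ ^ n) r, ← zpow_mul, mul_comm, zpow_mul, zpow_natCast,
      hprim.pow_eq_one, one_zpow]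
  have key : ∀ j : Fin r, τ ^ (((j:ℕ):ℤ) * n) = (τ ^ n) ^ ((j : ℕ)) := by
    intro j
    rw [← zpow_natCast (τ ^ n) (j : ℕ), ← zpow_mul, mul_comm]
  rw [Finset.sum_congr rfl (fun j _ => key j),
    Fin.sum_univ_eq_sum_range (fun k => (τ ^ n) ^ k) r, geom_sum_eq hx1, hxr, sub_self,
    zero_div]

lemma rc_eq {r : ℕ} [NeZero r] {V : Type*} [AddCommGroup V] [Module ℂ V]
    {e : Module.Basis (Fin r) ℂ V} {h : V → V → ℂ} (hm : HermMetric r e h)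
    {τ α : ℂ} (hτ : τ = Complex.exp (2 * Real.pi * Complex.I / r)) (hα : α ≠ 0)
    (hτ1 : ‖τ‖ = 1)
    {v : Fin r → V}
    (hv : ∀ i : Fin r, v i =
      ∑ j : Fin r, (τ ^ (-((i : ℕ) : ℤ) * ((j : ℕ) : ℤ)) * α ^ (-((j : ℕ) : ℤ))) • e j)
    (k : Fin r) :
    ∑ j : Fin r, τ ^ (((j:ℕ):ℤ) * ((k:ℕ):ℤ)) * h (v 0) (v j)
      = (r : ℂ) * (((Complex.normSq α : ℝ) : ℂ) ^ (-((k:ℕ):ℤ)) * h (e k) (e k)) := by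
  have hr : 0 < r := Nat.pos_of_ne_zero (NeZero.ne r)
  have hτ0 : τ ≠ 0 := fun h0 => by simp [h0] at hτ1
  have step1 : ∀ j : Fin r, τ ^ (((j:ℕ):ℤ) * ((k:ℕ):ℤ)) * h (v 0) (v j)
      = ∑ m : Fin r, τ ^ (((j:ℕ):ℤ) * (((k:ℕ):ℤ) - ((m:ℕ):ℤ))) *
          (((Complex.normSq α : ℝ) : ℂ) ^ (-((m:ℕ):ℤ)) * h (e m) (e m)) := by
    intro j
    rw [hm.expand hτ1 hα hv 0 j, Finset.mul_sum]
    refine Finset.sum_congr rfl fun m _ => ?_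
    rw [← mul_assoc, ← zpow_add₀ hτ0]
    have hexp : (((j:ℕ):ℤ) * ((k:ℕ):ℤ)) +
        (((((0:Fin r):ℕ):ℤ) - ((j:ℕ):ℤ)) * ((m:ℕ):ℤ))
        = ((j:ℕ):ℤ) * (((k:ℕ):ℤ) - ((m:ℕ):ℤ)) := by
      simp only [Fin.val_zero, Int.ofNat_zero, Nat.cast_zero]
      ring
    rw [hexp]
  rw [Finset.sum_congr rfl fun j _ => step1 j, Finset.sum_comm, Finset.sum_eq_single k]
  · simp [Finset.card_univ]
  · intro m _ hmk
    have hdvd : ¬ ((r : ℤ) ∣ (((k:ℕ):ℤ) - ((m:ℕ):ℤ))) := by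
      intro hd
      have habs : |(((k:ℕ):ℤ) - ((m:ℕ):ℤ))| < (r : ℤ) := by
        have hk := k.isLt; have hm2 := m.isLt
        rw [abs_lt]; omega
      have h0 := Int.eq_zero_of_abs_lt_dvd hd habs
      exact hmk (Fin.ext (by omega))
    rw [← Finset.sum_mul, sum_zpow_eq_zero hr hτ hdvd, zero_mul]
  · intro hmem; exact absurd (Finset.mem_univ k) hmem

lemma log_bound {x t δ : ℝ} (hδ1 : δ < 1) (ht0 : 0 ≤ t) (htδ : t < δ)
    (hxt : |x - 1| ≤ t) : |Real.log x| ≤ (1 - δ)⁻¹ * t := by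
  have hδ' : 0 < 1 - δ := by linarith
  obtain ⟨h1, h2⟩ := abs_le.mp hxt
  have hx0 : 0 < x := by linarith
  have hinv1 : (1 : ℝ) ≤ (1 - δ)⁻¹ := by
    rw [le_inv_comm₀ one_pos hδ']; linarith
  rw [abs_le]
  constructor
  · have hl : Real.log x⁻¹ ≤ x⁻¹ - 1 := Real.log_le_sub_one_of_pos (by positivity)
    rw [Real.log_inv] at hl
    have hx1 : x⁻¹ - 1 = (1 - x) / x := by field_simp
    have hd : (1 - x) / x ≤ t / (1 - δ) := by
      apply div_le_div₀ ht0 (by linarith) hδ' (by linarith)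
    have hd2 : t / (1 - δ) = (1 - δ)⁻¹ * t := div_eq_inv_mul t (1 - δ)
    rw [hx1] at hl
    linarith
  · have hu : Real.log x ≤ x - 1 := Real.log_le_sub_one_of_pos hx0
    nlinarith

/-- ε-orthogonality of the eigenbasis implies that `h` is close to
`h_can`. -/
theorem eps_orthogonal_close_to_hcan
    (r : ℕ) (hr : 1 < r) (V : Type*) [AddCommGroup V] [Module ℂ V]
    (e : Module.Basis (Fin r) ℂ V) (α : ℂ) (hα : α ≠ 0)
    (τ : ℂ) (hτ : τ = Complex.exp (2 * Real.pi * Complex.I / r))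
    (v : Fin r → V)
    (hv : ∀ i : Fin r, v i =
      ∑ j : Fin r, (τ ^ (-((i : ℕ) : ℤ) * ((j : ℕ) : ℤ)) * α ^ (-((j : ℕ) : ℤ))) • e j)
    (hcan : V → V → ℂ) (hcanMet : HermMetric r e hcan)
    (hcanVal : ∀ j : Fin r,
      hcan (e j) (e j) = ((‖α‖ ^ (-((r : ℤ) - 1) + 2 * ((j : ℕ) : ℤ)) : ℝ) : ℂ))
    (bcan : ℝ) (hbcan : ∀ i : Fin r, hcan (v i) (v i) = (bcan : ℂ))
    (h : V → V → ℂ) (hMet : HermMetric r e h)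
    (ε : ℝ) (hε0 : 0 ≤ ε) (hε1 : ε ≤ 1)
    (b : ℝ) (hb : ∀ i : Fin r, h (v i) (v i) = (b : ℂ))
    (hεb : ∀ i j : Fin r, i ≠ j → ‖h (v i) (v j)‖ ≤ ε * b)
    (δ : ℝ) (hδ0 : 0 < δ) (hδ1 : δ < 1) (hδε : ((r : ℝ) - 1) * ε < δ)
    (Cδ : ℝ) (hCδ : Cδ = (1 - δ)⁻¹ * ((r : ℝ) - 1)) :
    |Real.log (b / bcan)| ≤ Cδ * ε ∧
    ∀ j : Fin r,
      |Real.log ((h (e j) (e j)).re / (hcan (e j) (e j)).re)| ≤ 2 * Cδ * ε := by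
  haveI : NeZero r := ⟨by omega⟩
  have hr0 : (0:ℝ) < r := by exact_mod_cast Nat.zero_lt_of_lt hr
  have hr1' : (1:ℝ) ≤ r := by exact_mod_cast hr.le
  set A := ‖α‖ with hA
  have hA0 : 0 < A := by simpa [hA] using norm_pos_iff.mpr hα
  have hAz : A ≠ 0 := hA0.ne'
  have hNS : Complex.normSq α = A ^ 2 := (Complex.sq_norm α).symm
  have hτ1 : ‖τ‖ = 1 := by
    have h2 : (2 * (Real.pi:ℂ) * Complex.I / r) = ((2 * Real.pi / r : ℝ):ℂ) * Complex.I := by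
      push_cast; ring
    rw [hτ, h2, Complex.norm_exp_ofReal_mul_I]
  set H : Fin r → ℝ := fun m => (h (e m) (e m)).re with hHdef
  have hHe : ∀ m, h (e m) (e m) = ((H m : ℝ):ℂ) := fun m => hMet.real_diag (e m)
  have hHp : ∀ m, 0 < H m := fun m => hMet.pos_def (e m) (e.ne_zero m)
  set c : Fin r → ℝ := fun m => (A^2) ^ (-((m:ℕ):ℤ)) * H m with hcdef
  have hcp : ∀ m, 0 < c m := fun m => mul_pos (zpow_pos (by positivity) _) (hHp m)
  -- b = ∑ c
  have hbC : (b:ℂ) = ((∑ m, c m : ℝ) : ℂ) := by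
    rw [← hb 0, hMet.expand hτ1 hα hv 0 0,
      show ((∑ m, c m : ℝ):ℂ) = ∑ m, ((c m : ℝ):ℂ) from by push_cast; rfl]
    refine Finset.sum_congr rfl fun m _ => ?_
    rw [hHe m, hNS, show ((c m : ℝ):ℂ) = ((((A^2) ^ (-((m:ℕ):ℤ)) * H m : ℝ)):ℂ) from rfl,
      Complex.ofReal_mul, Complex.ofReal_zpow, Complex.ofReal_pow]
    simp
  have hbsum : b = ∑ m, c m := by exact_mod_cast hbC
  have hb0 : 0 < b := by
    rw [hbsum]; exact Finset.sum_pos (fun m _ => hcp m) Finset.univ_nonempty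
  -- bcan value
  have hAc : ∀ m : Fin r, (A^2 : ℝ) ^ (-((m:ℕ):ℤ)) * A ^ (-((r:ℤ)-1) + 2*((m:ℕ):ℤ))
      = A ^ (-((r:ℤ)-1)) := by
    intro m
    rw [← zpow_natCast A 2, ← zpow_mul, ← zpow_add₀ hAz]
    congr 1
    push_cast; ring
  have hbcanC : (bcan:ℂ) = ((∑ _m : Fin r, A ^ (-((r:ℤ)-1)) : ℝ) : ℂ) := by
    rw [← hbcan 0, hcanMet.expand hτ1 hα hv 0 0,
      show ((∑ _m : Fin r, A ^ (-((r:ℤ)-1)) : ℝ):ℂ)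
        = ∑ _m : Fin r, ((A ^ (-((r:ℤ)-1)) : ℝ):ℂ) from by push_cast; rfl]
    refine Finset.sum_congr rfl fun m _ => ?_
    rw [hcanVal m, hNS, ← hAc m, Complex.ofReal_mul, Complex.ofReal_zpow,
      Complex.ofReal_zpow, Complex.ofReal_pow]
    simp
  have hbcanval : bcan = r * A ^ (-((r:ℤ)-1)) := by
    have h9 := hbcanC
    rw [Finset.sum_const, Finset.card_univ, Fintype.card_fin, nsmul_eq_mul] at h9
    exact_mod_cast h9
  have hbcan0 : 0 < bcan := by
    rw [hbcanval]; exact mul_pos hr0 (zpow_pos hA0 _)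
  -- key bound
  set t : ℝ := ((r:ℝ)-1) * ε with htdef
  have ht0 : 0 ≤ t := mul_nonneg (by linarith) hε0
  have hkey : ∀ k : Fin r, |(r:ℝ) * c k - b| ≤ t * b := by
    intro k
    have h1 := rc_eq hMet hτ hα hτ1 hv k
    have hck : ((c k : ℝ):ℂ)
        = ((Complex.normSq α : ℝ):ℂ) ^ (-((k:ℕ):ℤ)) * h (e k) (e k) := by
      rw [hHe, hNS, Complex.ofReal_mul, Complex.ofReal_zpow, Complex.ofReal_pow]
    have hsplit : (∑ j : Fin r, τ ^ (((j:ℕ):ℤ) * ((k:ℕ):ℤ)) * h (v 0) (v j))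
        = (∑ j ∈ Finset.univ.erase (0 : Fin r),
            τ ^ (((j:ℕ):ℤ) * ((k:ℕ):ℤ)) * h (v 0) (v j)) + (b:ℂ) := by
      rw [← Finset.sum_erase_add Finset.univ _ (Finset.mem_univ (0 : Fin r))]
      congr 1
      rw [hb 0]
      norm_num
    have h4 : (((r:ℝ) * c k - b : ℝ) : ℂ)
        = ∑ j ∈ Finset.univ.erase (0 : Fin r), τ ^ (((j:ℕ):ℤ) * ((k:ℕ):ℤ)) * h (v 0) (v j) := by
      have h1' := h1
      rw [hsplit, ← hck] at h1'
      push_cast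
      linear_combination -h1'
    have h5 : |(r:ℝ) * c k - b| = ‖((((r:ℝ) * c k - b : ℝ)) : ℂ)‖ := by
      rw [Complex.norm_real, Real.norm_eq_abs]
    rw [h5, h4]
    calc ‖∑ j ∈ Finset.univ.erase (0 : Fin r),
            τ ^ (((j:ℕ):ℤ) * ((k:ℕ):ℤ)) * h (v 0) (v j)‖
        ≤ ∑ j ∈ Finset.univ.erase (0 : Fin r),
            ‖τ ^ (((j:ℕ):ℤ) * ((k:ℕ):ℤ)) * h (v 0) (v j)‖ :=
          norm_sum_le _ _
      _ ≤ ∑ _j ∈ Finset.univ.erase (0 : Fin r), ε * b := by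
          refine Finset.sum_le_sum fun j hj => ?_
          rw [norm_mul, norm_zpow, hτ1, one_zpow, one_mul]
          exact hεb 0 j (Ne.symm (Finset.ne_of_mem_erase hj))
      _ = t * b := by
          rw [Finset.sum_const, nsmul_eq_mul, Finset.card_erase_of_mem (Finset.mem_univ _),
            Finset.card_univ, Fintype.card_fin]
          have : ((r - 1 : ℕ) : ℝ) = (r:ℝ) - 1 := by
            rw [Nat.cast_sub hr.le, Nat.cast_one]
          rw [this, htdef]; ring
  -- x and per-k log bound
  set x : Fin r → ℝ := fun k => (r:ℝ) * c k / b with hxdef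
  have hxp : ∀ k, 0 < x k := fun k => div_pos (mul_pos hr0 (hcp k)) hb0
  have hxt : ∀ k, |x k - 1| ≤ t := by
    intro k
    have hx1 : x k - 1 = ((r:ℝ) * c k - b)/b := by
      rw [hxdef]; field_simp
    rw [hx1, abs_div, abs_of_pos hb0, div_le_iff₀ hb0]
    exact hkey k
  have hCδε : ∀ k, |Real.log (x k)| ≤ Cδ * ε := by
    intro k
    calc |Real.log (x k)| ≤ (1-δ)⁻¹ * t := log_bound hδ1 ht0 hδε (hxt k)
      _ = Cδ * ε := by rw [hCδ, htdef]; ring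
  -- log computations
  set L := Real.log A with hLdef
  have hlogc : ∀ k : Fin r, Real.log (c k) = -(((k:ℕ)):ℝ) * (2*L) + Real.log (H k) := by
    intro k
    show Real.log ((A^2) ^ (-((k:ℕ):ℤ)) * H k) = _
    rw [Real.log_mul (zpow_ne_zero _ (pow_ne_zero 2 hAz)) (hHp k).ne', Real.log_zpow,
      Real.log_pow]
    push_cast; ring
  have hlogx : ∀ k, Real.log (x k)
      = Real.log r + (-(((k:ℕ)):ℝ) * (2*L) + Real.log (H k)) - Real.log b := by
    intro k
    show Real.log ((r:ℝ) * c k / b) = _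
    rw [Real.log_div (ne_of_gt (mul_pos hr0 (hcp k))) hb0.ne',
      Real.log_mul hr0.ne' (hcp k).ne', hlogc k]
  have hprodH : ∑ k, Real.log (H k) = 0 := by
    rw [← Real.log_prod (fun k _ => (hHp k).ne')]
    have hpH : ∏ k, H k = 1 := by
      have hp := hMet.prod_one
      rw [Finset.prod_congr rfl (fun k (_ : k ∈ Finset.univ) => hHe k)] at hp
      exact_mod_cast hp
    rw [hpH, Real.log_one]
  have hsumk : ∑ k : Fin r, ((k:ℕ):ℝ) = (r:ℝ) * ((r:ℝ)-1) / 2 := by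
    rw [Fin.sum_univ_eq_sum_range (fun i => (i:ℝ)) r]
    have h2 := Finset.sum_range_id_mul_two r
    have h3 := congrArg (fun n : ℕ => (n:ℝ)) h2
    push_cast [Nat.cast_sub hr.le] at h3
    linarith
  have hs : ∑ k, Real.log (x k)
      = (r:ℝ) * Real.log r - (r:ℝ)*((r:ℝ)-1) * L - (r:ℝ) * Real.log b := by
    rw [Finset.sum_congr rfl (fun k (_ : k ∈ Finset.univ) => hlogx k)]
    rw [Finset.sum_sub_distrib, Finset.sum_add_distrib, Finset.sum_add_distrib]
    rw [← Finset.sum_mul, Finset.sum_neg_distrib, hsumk, hprodH]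
    simp [Finset.card_univ]
    ring
  have hlogbcan : Real.log bcan = Real.log r + (-((r:ℝ) -1)) * L := by
    rw [hbcanval, Real.log_mul hr0.ne' (zpow_ne_zero _ hAz), Real.log_zpow]
    push_cast; ring
  have hlogdiv : Real.log (b/bcan) = Real.log b - Real.log bcan :=
    Real.log_div hb0.ne' hbcan0.ne'
  have hkey2 : ∑ k, Real.log (x k) = -(r:ℝ) * Real.log (b/bcan) := by
    rw [hs, hlogdiv, hlogbcan]; ring
  have part1 : |Real.log (b / bcan)| ≤ Cδ * ε := by
    have h5 : (r:ℝ) * |Real.log (b/bcan)| = |∑ k, Real.log (x k)| := by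
      rw [hkey2, abs_mul, abs_neg, abs_of_pos hr0]
    have h6 : |∑ k, Real.log (x k)| ≤ (r:ℝ) * (Cδ * ε) := by
      calc |∑ k, Real.log (x k)| ≤ ∑ k, |Real.log (x k)| :=
            Finset.abs_sum_le_sum_abs _ _
        _ ≤ ∑ _k : Fin r, Cδ * ε := Finset.sum_le_sum (fun k _ => hCδε k)
        _ = (r:ℝ) * (Cδ*ε) := by
            rw [Finset.sum_const, Finset.card_univ, Fintype.card_fin, nsmul_eq_mul]
    have h7 : (r:ℝ) * |Real.log (b/bcan)| ≤ (r:ℝ) * (Cδ * ε) := by rw [h5]; exact h6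
    exact le_of_mul_le_mul_left h7 hr0
  refine ⟨part1, fun j => ?_⟩
  have hre : (hcan (e j) (e j)).re = A ^ (-((r:ℤ)-1) + 2*((j:ℕ):ℤ)) := by
    rw [hcanVal j]; exact Complex.ofReal_re _
  have hre2 : (h (e j) (e j)).re = H j := rfl
  have hr1 : Real.log ((h (e j) (e j)).re / (hcan (e j) (e j)).re)
      = Real.log (x j) + Real.log (b/bcan) := by
    rw [hre2, hre, Real.log_div (hHp j).ne' (zpow_ne_zero _ hAz), Real.log_zpow,
      hlogx j, hlogdiv, hlogbcan]
    push_cast; ring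
  rw [hr1]
  calc |Real.log (x j) + Real.log (b/bcan)|
      ≤ |Real.log (x j)| + |Real.log (b/bcan)| := abs_add_le _ _
    _ ≤ Cδ * ε + Cδ * ε := add_le_add (hCδε j) part1
    _ = 2 * Cδ * ε := by ring
end

section
/- Let a>1/2. Let f be a continuous real-valued function on the closure D̄_a(0) which is subharmonic in D_a(0). Assume there exist C>0, 0<ρ<a, M∈ℝ, and an exhaustive family {K_i} of D_a(0) such that f ≤ C(|z|^ρ+1) on ∂K_i for every i, and f ≤ M on ∂D_a(0). Then f ≤ M on D_a(0). -/
open Complex Metric Set Real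



/-- The sector `D_a(R) = {z : |z| > R, |arg z| < π/(2a)}`. -/
def Da (a R : ℝ) : Set ℂ :=
  {z : ℂ | R < ‖z‖ ∧ |Complex.arg z| < Real.pi / (2 * a)}

/-- A continuous function is subharmonic on an open set if it satisfies the
sub-mean-value inequality on every closed disc contained in the set. -/
def IsSubharmonicOn (u : ℂ → ℝ) (Ω : Set ℂ) : Prop :=
  ContinuousOn u Ω ∧
  ∀ (z : ℂ) (ρ : ℝ), 0 < ρ → Metric.closedBall z ρ ⊆ Ω →
    u z ≤ (2 * Real.pi)⁻¹ *
      ∫ θ in (0 : ℝ)..(2 * Real.pi), u (z + ρ * Complex.exp (θ * Complex.I))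

/-- An exhaustive family of an open set: an increasing sequence of relatively compact
open subsets whose union is the whole set. -/
structure ExhaustiveFamily (K : ℕ → Set ℂ) (U : Set ℂ) : Prop where
  isOpen : ∀ i, IsOpen (K i)
  compact_closure : ∀ i, IsCompact (closure (K i))
  closure_subset : ∀ i, closure (K i) ⊆ U
  mono : ∀ i, K i ⊆ K (i + 1)
  union_eq : (⋃ i, K i) = U


/-- Mean value property for a holomorphic function on a disc. -/
lemma holoMean {h : ℂ → ℂ} {z : ℂ} {r : ℝ} (hr : 0 < r)
    (hd : DiffContOnCl ℂ h (Metric.ball z r)) :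
    h z = (2 * Real.pi : ℂ)⁻¹ *
      ∫ θ in (0:ℝ)..(2*Real.pi), h (z + r * Complex.exp (θ * Complex.I)) := by
  have h1 := hd.circleIntegral_sub_inv_smul (Metric.mem_ball_self hr)
  rw [circleIntegral] at h1
  have h2 : ∀ θ : ℝ, deriv (circleMap z r) θ •
      ((circleMap z r θ - z)⁻¹ • h (circleMap z r θ))
      = Complex.I * h (z + r * Complex.exp (θ * Complex.I)) := by
    intro θ
    have hne : circleMap 0 r θ ≠ 0 := by
      intro h0
      have := norm_circleMap_zero r θ
      rw [h0] at this
      simp [abs_of_pos hr] at this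
      linarith
    rw [deriv_circleMap, circleMap_sub_center]
    have : circleMap z r θ = z + r * Complex.exp (θ * Complex.I) := by
      simp [circleMap]
    rw [this]
    simp only [smul_eq_mul]
    field_simp
  simp only [h2] at h1
  rw [intervalIntegral.integral_const_mul] at h1
  have h3 : (∫ θ in (0:ℝ)..(2*Real.pi), h (z + r * Complex.exp (θ * Complex.I)))
      = 2 * Real.pi * h z := by
    have := h1
    have hI : (Complex.I : ℂ) ≠ 0 := Complex.I_ne_zero
    field_simp at this ⊢
    have : Complex.I * ∫ θ in (0:ℝ)..(2*Real.pi), h (z + r * Complex.exp (θ * Complex.I))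
        = Complex.I * (2 * Real.pi * h z) := by
      rw [h1]; push_cast; ring_nf
    have h' := mul_left_cancel₀ hI this
    simpa only [mul_comm Complex.I] using h'
  rw [h3]
  have hpi : (2 * Real.pi : ℂ) ≠ 0 := by
    simp [Real.pi_ne_zero]
  field_simp

/-- Real part mean value. -/
lemma holoMeanRe {h : ℂ → ℂ} {z : ℂ} {r : ℝ} (hr : 0 < r)
    (hd : DiffContOnCl ℂ h (Metric.ball z r)) :
    (h z).re = (2 * Real.pi)⁻¹ *
      ∫ θ in (0:ℝ)..(2*Real.pi), (h (z + r * Complex.exp (θ * Complex.I))).re := by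
  have h1 := holoMean hr hd
  have hcont : Continuous fun θ : ℝ => h (z + r * Complex.exp (θ * Complex.I)) := by
    have hco : ContinuousOn h (Metric.closedBall z r) := by
      have := hd.continuousOn
      rwa [closure_ball z hr.ne'] at this
    apply hco.comp_continuous
    · continuity
    · intro θ
      simp only [Metric.mem_closedBall, dist_eq_norm]
      have : ‖(r:ℂ) * Complex.exp (θ * Complex.I)‖ = r := by
        rw [norm_mul]
        simp [Complex.norm_exp, abs_of_pos hr]
      simpa using le_of_eq this
  have hint : IntervalIntegrable (fun θ : ℝ => h (z + r * Complex.exp (θ * Complex.I)))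
      MeasureTheory.volume 0 (2*Real.pi) := hcont.intervalIntegrable _ _
  have h2 := Complex.reCLM.intervalIntegral_comp_comm hint
  calc (h z).re = ((2 * Real.pi : ℂ)⁻¹ *
      ∫ θ in (0:ℝ)..(2*Real.pi), h (z + r * Complex.exp (θ * Complex.I))).re := by rw [← h1]
    _ = (2 * Real.pi)⁻¹ *
      ∫ θ in (0:ℝ)..(2*Real.pi), (h (z + r * Complex.exp (θ * Complex.I))).re := by
      have : ((2 * Real.pi : ℂ))⁻¹ = ((((2*Real.pi)⁻¹ : ℝ)) : ℂ) := by push_cast; ring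
      rw [this, Complex.re_ofReal_mul]
      congr 1
      exact h2.symm

/-- On a circle of radius `r`, every point has the form `z + r e^{iθ}` with `θ ∈ [0, 2π)`. -/
lemma sphere_param {z w : ℂ} {r : ℝ} (hr : 0 < r) (hw : w ∈ Metric.sphere z r) :
    ∃ θ ∈ Set.Ico (0:ℝ) (2*Real.pi), w = z + r * Complex.exp (θ * Complex.I) := by
  have habs : ‖w - z‖ = r := by
    rw [Metric.mem_sphere, dist_eq_norm] at hw
    simpa using hw
  have hkey : (r : ℂ) * Complex.exp ((Complex.arg (w - z)) * Complex.I) = w - z := by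
    rw [← habs]; exact Complex.norm_mul_exp_arg_mul_I (w - z)
  rcases le_or_gt 0 (Complex.arg (w - z)) with hα | hα
  · refine ⟨Complex.arg (w - z), ⟨hα, ?_⟩, by rw [hkey]; ring⟩
    have := Complex.arg_le_pi (w - z)
    linarith [Real.pi_pos]
  · refine ⟨Complex.arg (w - z) + 2*Real.pi, ⟨by linarith [Complex.neg_pi_lt_arg (w - z), Real.pi_pos], by
      linarith [Complex.arg_le_pi (w - z)]⟩, ?_⟩
    have : Complex.exp (↑(Complex.arg (w - z) + 2*Real.pi) * Complex.I)
        = Complex.exp ((Complex.arg (w - z)) * Complex.I) := by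
      push_cast
      rw [add_mul, Complex.exp_add, Complex.exp_two_pi_mul_I, mul_one]
    rw [this, hkey]; ring

/-- A continuous nonnegative function on with nonpositive integral over `[0, 2π]`
vanishes on `[0, 2π)`. -/
lemma zero_of_integral_nonpos {F : ℝ → ℝ} (hFc : Continuous F) (hF0 : ∀ θ, 0 ≤ F θ)
    (hI : (∫ θ in (0:ℝ)..(2*Real.pi), F θ) ≤ 0) :
    ∀ θ ∈ Set.Ico (0:ℝ) (2*Real.pi), F θ = 0 := by
  intro θ0 hθ0
  by_contra hne
  have hpos : 0 < F θ0 := lt_of_le_of_ne (hF0 θ0) (Ne.symm hne)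
  have hop : IsOpen {θ : ℝ | 0 < F θ} := isOpen_lt continuous_const hFc
  rcases Metric.isOpen_iff.1 hop θ0 hpos with ⟨δ, hδ, hball⟩
  have hlt : 0 < ∫ θ in (0:ℝ)..(2*Real.pi), F θ := by
    rw [intervalIntegral.integral_pos_iff_support_of_nonneg_ae
      (Filter.Eventually.of_forall hF0) (hFc.intervalIntegrable _ _)]
    refine ⟨by positivity, ?_⟩
    set m := min (θ0 + δ) (2*Real.pi) with hm
    have h1 : θ0 < m := lt_min (by linarith) hθ0.2
    have hsub : Set.Ioo θ0 m ⊆ Function.support F ∩ Set.Ioc 0 (2*Real.pi) := by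
      intro x hx
      constructor
      · apply ne_of_gt
        apply hball
        rw [Metric.mem_ball, Real.dist_eq, abs_lt]
        constructor <;> [linarith [hx.1]; linarith [hx.2, min_le_left (θ0+δ) (2*Real.pi)]]
      · exact ⟨lt_of_le_of_lt hθ0.1 hx.1, le_trans hx.2.le (min_le_right _ _)⟩
    calc (0:ENNReal) < MeasureTheory.volume (Set.Ioo θ0 m) := by
          rw [Real.volume_Ioo]; simp [h1]
      _ ≤ _ := MeasureTheory.measure_mono hsub
  linarith

/-- Maximum principle for functions with the sub-mean-value property. -/
lemma maxPrinciple {V : Set ℂ} (hVo : IsOpen V) (hVb : IsCompact (closure V))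
    {u : ℂ → ℝ} (hu : ContinuousOn u (closure V))
    (hsub : ∀ z r, 0 < r → Metric.closedBall z r ⊆ V →
      u z ≤ (2*Real.pi)⁻¹ * ∫ θ in (0:ℝ)..(2*Real.pi), u (z + r * Complex.exp (θ * Complex.I)))
    {z : ℂ} (hz : z ∈ V) : ∃ x ∈ frontier V, u z ≤ u x := by
  -- max point
  obtain ⟨z0, hz0m, hz0max⟩ := hVb.exists_isMaxOn ⟨z, subset_closure hz⟩ hu
  have hzle : u z ≤ u z0 := hz0max (subset_closure hz)
  by_cases hz0V : z0 ∈ V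
  swap
  · exact ⟨z0, ⟨hz0m, fun h => hz0V (interior_subset (hVo.interior_eq ▸ h))⟩, hzle⟩
  · -- z0 is interior; propagate max to the boundary
    have hVne : Vᶜ.Nonempty := by
      by_contra h
      rw [Set.not_nonempty_iff_eq_empty, Set.compl_empty_iff] at h
      rw [h, closure_univ] at hVb
      exact NoncompactSpace.noncompact_univ (X := ℂ) hVb
    have hVc : IsClosed Vᶜ := hVo.isClosed_compl
    set d := Metric.infDist z0 Vᶜ with hd
    have hdpos : 0 < d := by
      rw [hd]
      exact (hVc.notMem_iff_infDist_pos hVne).1 (by simpa using hz0V)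
    obtain ⟨x, hxVc, hxd⟩ := hVc.exists_infDist_eq_dist hVne z0
    have hball : Metric.ball z0 d ⊆ V := by
      intro y hy
      by_contra hyV
      have := Metric.infDist_le_dist_of_mem (x := z0) (show y ∈ Vᶜ from hyV)
      rw [← hd, dist_comm] at this
      rw [Metric.mem_ball] at hy
      linarith
    -- u = max on every circle of radius r < d
    have hcirc : ∀ r, 0 < r → r < d → ∀ w ∈ Metric.sphere z0 r, u w = u z0 := by
      intro r hr hrd w hw
      have hcb : Metric.closedBall z0 r ⊆ V := fun y hy =>
        hball (lt_of_le_of_lt (Metric.mem_closedBall.1 hy) hrd)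
      have hsph : ∀ θ : ℝ, z0 + r * Complex.exp (θ * Complex.I) ∈ Metric.closedBall z0 r := by
        intro θ
        rw [Metric.mem_closedBall, dist_eq_norm]
        have : ‖(r:ℂ) * Complex.exp (θ * Complex.I)‖ = r := by
          rw [norm_mul]
          simp [Complex.norm_exp, abs_of_pos hr]
        simpa using le_of_eq this
      set F : ℝ → ℝ := fun θ => u z0 - u (z0 + r * Complex.exp (θ * Complex.I)) with hF
      have hFc : Continuous F := by
        apply Continuous.sub continuous_const
        apply hu.comp_continuous
        · continuity
        · intro θ
          exact subset_closure (hcb (hsph θ))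
      have hF0 : ∀ θ, 0 ≤ F θ := fun θ =>
        sub_nonneg.2 (hz0max (subset_closure (hcb (hsph θ))))
      have hIle : (∫ θ in (0:ℝ)..(2*Real.pi), F θ) ≤ 0 := by
        have hint : IntervalIntegrable (fun θ : ℝ => u (z0 + r * Complex.exp (θ * Complex.I)))
            MeasureTheory.volume 0 (2*Real.pi) := by
          apply Continuous.intervalIntegrable
          apply hu.comp_continuous
          · continuity
          · intro θ; exact subset_closure (hcb (hsph θ))
        rw [hF, intervalIntegral.integral_sub (intervalIntegrable_const) hint,
          intervalIntegral.integral_const]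
        have := hsub z0 r hr hcb
        have h2π : (0:ℝ) < 2*Real.pi := by positivity
        have : 2*Real.pi * u z0 ≤ ∫ θ in (0:ℝ)..(2*Real.pi), u (z0 + r * Complex.exp (θ * Complex.I)) := by
          calc 2*Real.pi * u z0 ≤ 2*Real.pi * ((2*Real.pi)⁻¹ *
              ∫ θ in (0:ℝ)..(2*Real.pi), u (z0 + r * Complex.exp (θ * Complex.I))) := by
                exact mul_le_mul_of_nonneg_left this h2π.le
            _ = _ := by field_simp; simp only [mul_comm Complex.I]
        simp only [smul_eq_mul, sub_zero]
        linarith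
      obtain ⟨θ, hθ, hwθ⟩ := sphere_param hr hw
      have := zero_of_integral_nonpos hFc hF0 hIle θ hθ
      rw [hF] at this
      simp only [sub_eq_zero] at this
      rw [hwθ]
      exact this.symm
    -- pass to the limit to reach the frontier point x
    have hxdd : dist z0 x = d := hxd.symm
    have hxfr : x ∈ frontier V := by
      constructor
      · -- x ∈ closure V
        have : x ∈ Metric.closedBall z0 d := by
          rw [Metric.mem_closedBall, dist_comm, hxdd]
        rw [← closure_ball z0 hdpos.ne'] at this
        exact closure_mono hball this
      · rw [hVo.interior_eq]; exact hxVc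
    refine ⟨x, hxfr, ?_⟩
    -- u x = u z0 via limit along the segment
    have hseq : Filter.Tendsto (fun n : ℕ => z0 + ((1 - 1/(n+2) : ℝ) : ℂ) • (x - z0))
        Filter.atTop (nhds x) := by
      have h1 : Filter.Tendsto (fun n : ℕ => (1 - 1/(n+2) : ℝ)) Filter.atTop (nhds 1) := by
        have := Filter.Tendsto.comp (tendsto_one_div_atTop_nhds_zero_nat (𝕜 := ℝ))
          (Filter.tendsto_add_atTop_nat 2)
        simpa using (tendsto_const_nhds.sub this)
      have := ((Complex.continuous_ofReal.tendsto 1).comp h1).smul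
        (tendsto_const_nhds (x := x - z0) (f := Filter.atTop (α := ℕ)))
      have h2 := (tendsto_const_nhds (x := z0) (f := Filter.atTop (α := ℕ))).add this
      simpa using h2
    have hmem : ∀ n : ℕ, u (z0 + ((1 - 1/(n+2) : ℝ) : ℂ) • (x - z0)) = u z0 := by
      intro n
      have hn2 : (0:ℝ) < 1/(n+2) := by positivity
      have hn2' : 1/((n:ℝ)+2) ≤ 1/2 := by
        apply div_le_div_of_nonneg_left one_pos.le two_pos
        · push_cast; linarith
      set t : ℝ := 1 - 1/(n+2) with ht
      have ht0 : 0 < t := by rw [ht]; linarith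
      have ht1 : t < 1 := by rw [ht]; linarith
      have hxz : ‖x - z0‖ = d := by rw [← dist_eq_norm, dist_comm]; exact hxdd
      have hr : ‖(t : ℂ) • (x - z0)‖ = t * d := by
        rw [norm_smul, hxz]
        simp [abs_of_pos ht0]
      apply hcirc (t * d) (by positivity) (by nlinarith)
      rw [Metric.mem_sphere, dist_eq_norm]
      simpa using hr
    have hx_cl : x ∈ closure V := hxfr.1
    have hucont := (hu x hx_cl).tendsto
    have hseqV : ∀ n : ℕ, z0 + ((1 - 1/(n+2) : ℝ) : ℂ) • (x - z0) ∈ closure V := by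
      intro n
      apply subset_closure
      apply hball
      rw [Metric.mem_ball, dist_eq_norm]
      have hn2 : (0:ℝ) < 1/(n+2) := by positivity
      have hn2' : 1/((n:ℝ)+2) ≤ 1/2 := by
        apply div_le_div_of_nonneg_left one_pos.le two_pos
        · push_cast; linarith
      set t : ℝ := 1 - 1/(n+2) with ht
      have ht0 : 0 < t := by rw [ht]; linarith
      have ht1 : t < 1 := by rw [ht]; linarith
      have hxz : ‖x - z0‖ = d := by rw [← dist_eq_norm, dist_comm]; exact hxdd
      have : ‖(t : ℂ) • (x - z0)‖ = t * d := by
        rw [norm_smul, hxz]; simp [abs_of_pos ht0]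
      calc ‖z0 + (t : ℂ) • (x - z0) - z0‖ = t * d := by simpa using this
        _ < d := by nlinarith
    have htend : Filter.Tendsto (fun n : ℕ => u (z0 + ((1 - 1/(n+2) : ℝ) : ℂ) • (x - z0)))
        Filter.atTop (nhds (u x)) := by
      apply hucont.comp
      apply tendsto_nhdsWithin_of_tendsto_nhds_of_eventually_within _ hseq
      exact Filter.Eventually.of_forall hseqV
    have : Filter.Tendsto (fun _ : ℕ => u z0) Filter.atTop (nhds (u x)) := by
      simpa only [hmem] using htend
    have hux : u x = u z0 := (tendsto_nhds_unique tendsto_const_nhds this).symm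
    rw [hux]; exact hzle

/-- Closed sector described without `arg`. -/
def SectorCl (t : ℝ) : Set ℂ := {z : ℂ | ‖z‖ * Real.cos t ≤ z.re}

lemma sectorCl_closed (t : ℝ) : IsClosed (SectorCl t) := by
  have : SectorCl t = {z : ℂ | ‖z‖ * Real.cos t - z.re ≤ 0} := by
    ext z; simp [SectorCl, sub_nonpos]
  rw [this]
  exact isClosed_le (by continuity) continuous_const

lemma arg_mem_of_sector {t : ℝ} (ht0 : 0 < t) (htπ : t < Real.pi) {z : ℂ} (hz : z ∈ SectorCl t)
    (hz0 : z ≠ 0) : |Complex.arg z| ≤ t := by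
  have habs : 0 < ‖z‖ := (norm_pos_iff.mpr hz0)
  have hcos : Real.cos t ≤ Real.cos |Complex.arg z| := by
    rw [Real.cos_abs]
    have := Complex.cos_arg hz0
    have h2 : Real.cos (Complex.arg z) = z.re / ‖z‖ := this
    rw [h2, le_div_iff₀ habs]
    have := hz
    simp only [SectorCl, Set.mem_setOf_eq] at this
    linarith [this]
  by_contra hlt
  push_neg at hlt
  have := Real.cos_lt_cos_of_nonneg_of_le_pi ht0.le (Complex.abs_arg_le_pi z) hlt
  linarith

lemma Da_subset_sectorCl {a : ℝ} (ha : 1/2 < a) :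
    Da a 0 ⊆ SectorCl (Real.pi / (2*a)) := by
  intro z hz
  obtain ⟨habs, harg⟩ := hz
  have hz0 : z ≠ 0 := by
    intro h; rw [h] at habs; simp at habs
  have habs' : 0 < ‖z‖ := by simpa using habs
  have hta : 0 < Real.pi / (2*a) := by positivity
  have htπ : Real.pi / (2*a) < Real.pi := by
    rw [div_lt_iff₀ (by linarith : (0:ℝ) < 2*a)]
    nlinarith [Real.pi_pos]
  have hcos : Real.cos (Real.pi / (2*a)) ≤ Real.cos (Complex.arg z) := by
    rw [← Real.cos_abs (Complex.arg z)]
    apply Real.cos_le_cos_of_nonneg_of_le_pi (abs_nonneg _) htπ.le harg.le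
  have h2 : Real.cos (Complex.arg z) = z.re / ‖z‖ := Complex.cos_arg hz0
  simp only [SectorCl, Set.mem_setOf_eq]
  rw [h2] at hcos
  calc ‖z‖ * Real.cos (Real.pi/(2*a)) ≤ ‖z‖ * (z.re / ‖z‖) :=
        mul_le_mul_of_nonneg_left hcos habs'.le
    _ = z.re := by field_simp

lemma closure_Da_subset_sectorCl {a : ℝ} (ha : 1/2 < a) :
    closure (Da a 0) ⊆ SectorCl (Real.pi / (2*a)) :=
  closure_minimal (Da_subset_sectorCl ha) (sectorCl_closed _)

/-- Formula for the real part of a real power. -/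
lemma re_cpow {z : ℂ} (hz : z ≠ 0) (b : ℝ) :
    (z ^ (b:ℂ)).re = ‖z‖ ^ b * Real.cos (b * Complex.arg z) := by
  rw [Complex.cpow_def_of_ne_zero hz, Complex.exp_re]
  congr 1
  · rw [Complex.mul_re, Complex.log_re, Complex.log_im]
    have : (b:ℂ).im = 0 := rfl
    have hre : (b:ℂ).re = b := rfl
    rw [this, hre, mul_zero, sub_zero, Real.rpow_def_of_pos ((norm_pos_iff.mpr hz))]
  · rw [Complex.mul_im, Complex.log_im, Complex.log_re]
    have : (b:ℂ).im = 0 := rfl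
    have hre : (b:ℂ).re = b := rfl
    rw [this, hre, mul_zero, zero_add]
    ring_nf

/-- Lower and upper bounds for `Re(z^b)` on the closed sector. -/
lemma re_cpow_bounds {t b : ℝ} (ht0 : 0 < t) (htπ : t < Real.pi) (hb : 0 < b)
    (hbt : b * t < Real.pi/2) {z : ℂ} (hz : z ∈ SectorCl t) :
    Real.cos (b*t) * ‖z‖ ^ b ≤ (z ^ (b:ℂ)).re ∧
      (z ^ (b:ℂ)).re ≤ ‖z‖ ^ b := by
  rcases eq_or_ne z 0 with rfl | hz0
  · rw [Complex.zero_cpow (by exact_mod_cast hb.ne' : (b:ℂ) ≠ 0)]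
    simp [Real.zero_rpow hb.ne']
  · rw [re_cpow hz0 b]
    have habs : (0:ℝ) < ‖z‖ := (norm_pos_iff.mpr hz0)
    have hrp : (0:ℝ) ≤ ‖z‖ ^ b := Real.rpow_nonneg habs.le b
    have harg := arg_mem_of_sector ht0 htπ hz hz0
    constructor
    · rw [mul_comm (Real.cos (b*t))]
      apply mul_le_mul_of_nonneg_left _ hrp
      rw [← Real.cos_abs (b * Complex.arg z)]
      apply Real.cos_le_cos_of_nonneg_of_le_pi (abs_nonneg _)
      · linarith [Real.pi_pos]
      · rw [abs_mul, abs_of_pos hb]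
        exact mul_le_mul_of_nonneg_left harg hb.le
    · calc ‖z‖ ^ b * Real.cos (b * Complex.arg z) ≤ ‖z‖ ^ b * 1 :=
          mul_le_mul_of_nonneg_left (Real.cos_le_one _) hrp
        _ = _ := mul_one _

lemma sector_re_im {t : ℝ} (ht0 : 0 < t) (htπ : t < Real.pi) {z : ℂ} (hz : z ∈ SectorCl t) :
    0 ≤ z.re ∨ z.im ≠ 0 := by
  by_contra h
  push_neg at h
  obtain ⟨hre, him⟩ := h
  have habs : ‖z‖ = -z.re := by
    have : z = (z.re : ℂ) := by
      apply Complex.ext <;> simp [him]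
    rw [this]
    simp [Complex.norm_real, abs_of_neg hre]
  have hcos : -1 < Real.cos t := by
    have := Real.cos_lt_cos_of_nonneg_of_le_pi ht0.le (le_refl Real.pi) htπ
    rwa [Real.cos_pi] at this
  have := hz
  simp only [SectorCl, Set.mem_setOf_eq, habs] at this
  nlinarith

lemma sector_continuousAt_cpow {t b : ℝ} (ht0 : 0 < t) (htπ : t < Real.pi) (hb : 0 < b)
    {z : ℂ} (hz : z ∈ SectorCl t) :
    ContinuousAt (fun w : ℂ => (w ^ (b:ℂ)).re) z := by
  apply Complex.continuous_re.continuousAt.comp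
  exact Complex.continuousAt_cpow_const_of_re_pos (sector_re_im ht0 htπ hz)
    (by simpa using hb)

lemma Da_mem_slitPlane {a : ℝ} (ha : 1/2 < a) {z : ℂ} (hz : z ∈ Da a 0) :
    z ∈ Complex.slitPlane := by
  rw [Complex.mem_slitPlane_iff]
  obtain ⟨habs, harg⟩ := hz
  have hz0 : z ≠ 0 := by intro h; rw [h] at habs; simp at habs
  by_contra h
  push_neg at h
  obtain ⟨hre, him⟩ := h
  rcases lt_or_eq_of_le hre with hre' | hre'
  · have : Complex.arg z = Real.pi := Complex.arg_eq_pi_iff.2 ⟨hre', him⟩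
    rw [this] at harg
    have hta : Real.pi / (2*a) < Real.pi := by
      rw [div_lt_iff₀ (by linarith : (0:ℝ) < 2*a)]
      nlinarith [Real.pi_pos]
    rw [abs_of_pos Real.pi_pos] at harg
    linarith
  · exact hz0 (by apply Complex.ext <;> simp [him, ← hre'])

lemma growth_bound {C ρ b c ε : ℝ} (hC : 0 < C) (hρ : 0 < ρ) (hb : ρ < b) (hc : 0 < c)
    (hε : 0 < ε) : ∃ B, 0 ≤ B ∧ ∀ r : ℝ, 0 ≤ r → C*(r^ρ+1) ≤ ε*c*r^b + B := by
  set r0 : ℝ := max 1 ((2*C/(ε*c)) ^ (b-ρ)⁻¹) with hr0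
  have hr01 : 1 ≤ r0 := le_max_left _ _
  have hr00 : 0 < r0 := lt_of_lt_of_le one_pos hr01
  refine ⟨C*(r0^ρ+1), by positivity, fun r hr => ?_⟩
  rcases le_or_gt r r0 with hle | hlt
  · have h1 : r^ρ ≤ r0^ρ := Real.rpow_le_rpow hr hle hρ.le
    have h2 : (0:ℝ) ≤ ε*c*r^b := by positivity
    nlinarith
  · have hr1 : 1 ≤ r := le_trans hr01 hlt.le
    have hrpos : 0 < r := lt_of_lt_of_le one_pos hr1
    have h1 : 1 ≤ r^ρ := by
      calc (1:ℝ) = 1^ρ := (Real.one_rpow ρ).symm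
        _ ≤ r^ρ := Real.rpow_le_rpow zero_le_one hr1 hρ.le
    have hkey : 2*C ≤ ε*c*r^(b-ρ) := by
      have h2 : (2*C/(ε*c)) ^ (b-ρ)⁻¹ ≤ r := le_trans (le_max_right _ _) hlt.le
      have h3 : ((2*C/(ε*c)) ^ (b-ρ)⁻¹) ^ (b-ρ) ≤ r ^ (b-ρ) :=
        Real.rpow_le_rpow (Real.rpow_nonneg (by positivity) _) h2 (by linarith)
      rw [Real.rpow_inv_rpow (by positivity) (by intro h; exact absurd h (by intro hh; linarith [hh] : ¬ (b - ρ = 0)))] at h3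
      calc 2*C = ε*c*(2*C/(ε*c)) := by field_simp
        _ ≤ ε*c*r^(b-ρ) := mul_le_mul_of_nonneg_left h3 (by positivity)
    have hsplit : r^b = r^ρ * r^(b-ρ) := by
      rw [← Real.rpow_add hrpos]; ring_nf
    have h4 : C*(r^ρ+1) ≤ 2*C*r^ρ := by nlinarith
    have h5 : 2*C*r^ρ ≤ ε*c*r^b := by
      rw [hsplit]
      calc 2*C*r^ρ ≤ (ε*c*r^(b-ρ))*r^ρ := by
            apply mul_le_mul_of_nonneg_right hkey (by positivity)
        _ = ε*c*(r^ρ*r^(b-ρ)) := by ring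
    have h6 : (0:ℝ) ≤ C*(r0^ρ+1) := by positivity
    linarith

lemma circleParam_continuous (z' : ℂ) (r : ℝ) :
    Continuous fun θ : ℝ => z' + (r:ℂ) * Complex.exp (θ * Complex.I) := by
  continuity

lemma circle_mem_closedBall (z : ℂ) {r : ℝ} (hr : 0 < r) (θ : ℝ) :
    z + r * Complex.exp (θ * Complex.I) ∈ Metric.closedBall z r := by
  rw [Metric.mem_closedBall, dist_eq_norm]
  have : ‖(r:ℂ) * Complex.exp (θ * Complex.I)‖ = r := by
    rw [norm_mul]
    simp [Complex.norm_exp, abs_of_pos hr]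
  simpa using le_of_eq this

lemma Da_isOpen {a : ℝ} (ha : 1/2 < a) : IsOpen (Da a 0) := by
  rw [isOpen_iff_mem_nhds]
  intro z hz
  have hslit := Da_mem_slitPlane ha hz
  have hargc : ContinuousAt (fun w : ℂ => |Complex.arg w|) z :=
    (Complex.continuousAt_arg hslit).abs
  have h1 : {w : ℂ | 0 < ‖w‖} ∈ nhds z := by
    apply (isOpen_lt continuous_const continuous_norm).mem_nhds
    simpa using hz.1
  have h2 : {w : ℂ | |Complex.arg w| < Real.pi / (2*a)} ∈ nhds z :=
    hargc.preimage_mem_nhds (Iio_mem_nhds hz.2)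
  filter_upwards [h1, h2] with w hw1 hw2
  exact ⟨by simpa using hw1, hw2⟩

set_option maxHeartbeats 1000000 in
/-- Phragmén–Lindelöf theorem for subharmonic functions on the
sector `D_a(0)`. -/
theorem phragmen_lindelof_subharmonic
    (a : ℝ) (ha : 1 / 2 < a) (f : ℂ → ℝ)
    (hfc : ContinuousOn f (closure (Da a 0)))
    (hfs : IsSubharmonicOn f (Da a 0))
    (C ρ M : ℝ) (hC : 0 < C) (hρ0 : 0 < ρ) (hρa : ρ < a)
    (K : ℕ → Set ℂ) (hK : ExhaustiveFamily K (Da a 0))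
    (hKbd : ∀ i, ∀ z ∈ frontier (K i), f z ≤ C * (‖z‖ ^ ρ + 1))
    (hM : ∀ z ∈ frontier (Da a 0), f z ≤ M) :
    ∀ z ∈ Da a 0, f z ≤ M := by
  intro z hz
  set U := Da a 0 with hUdef
  have hUo : IsOpen U := Da_isOpen ha
  set t : ℝ := Real.pi / (2*a) with htdef
  have ha0 : (0:ℝ) < a := by linarith
  have ht0 : 0 < t := by rw [htdef]; positivity
  have htπ : t < Real.pi := by
    rw [htdef, div_lt_iff₀ (by linarith : (0:ℝ) < 2*a)]
    nlinarith [Real.pi_pos]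
  set b : ℝ := (ρ + a)/2 with hbdef
  have hb0 : 0 < b := by rw [hbdef]; linarith
  have hbρ : ρ < b := by rw [hbdef]; linarith
  have hba : b < a := by rw [hbdef]; linarith
  have hbt : b * t < Real.pi/2 := by
    have h : b * t = b*Real.pi/(2*a) := by rw [htdef]; ring
    rw [h, div_lt_div_iff₀ (by linarith : (0:ℝ) < 2*a) two_pos]
    nlinarith [Real.pi_pos]
  set c : ℝ := Real.cos (b*t) with hcdef
  have hc : 0 < c := Real.cos_pos_of_mem_Ioo ⟨by nlinarith [Real.pi_pos], hbt⟩
  set φ : ℂ → ℝ := fun w => (w ^ (b:ℂ)).re with hφdef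
  have hUsec : U ⊆ SectorCl t := Da_subset_sectorCl ha
  have hUsec' : closure U ⊆ SectorCl t := closure_Da_subset_sectorCl ha
  have hφc : ContinuousOn φ (SectorCl t) := fun w hw =>
    (sector_continuousAt_cpow ht0 htπ hb0 hw).continuousWithinAt
  have hφlb : ∀ w ∈ SectorCl t, c * ‖w‖ ^ b ≤ φ w := fun w hw =>
    (re_cpow_bounds ht0 htπ hb0 hbt hw).1
  have hφub : ∀ w ∈ SectorCl t, φ w ≤ ‖w‖ ^ b := fun w hw =>
    (re_cpow_bounds ht0 htπ hb0 hbt hw).2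
  have hφ0 : ∀ w ∈ SectorCl t, 0 ≤ φ w := by
    intro w hw
    have := hφlb w hw
    have h2 : (0:ℝ) ≤ c * ‖w‖ ^ b := by positivity
    linarith
  -- sub-mean-value property for f - σ φ on subsets of U
  have gsub : ∀ (σ : ℝ) (V : Set ℂ), V ⊆ U → ∀ z' r, 0 < r → Metric.closedBall z' r ⊆ V →
      f z' - σ * φ z' ≤ (2*Real.pi)⁻¹ * ∫ θ in (0:ℝ)..(2*Real.pi),
        (f (z' + r * Complex.exp (θ * Complex.I)) -
          σ * φ (z' + r * Complex.exp (θ * Complex.I))) := by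
    intro σ V hVU z' r hr hcb
    have hcbU : Metric.closedBall z' r ⊆ U := hcb.trans hVU
    have hf1 := hfs.2 z' r hr hcbU
    have hdcc : DiffContOnCl ℂ (fun w : ℂ => w ^ (b:ℂ)) (Metric.ball z' r) := by
      constructor
      · intro w hw
        exact ((Complex.hasStrictDerivAt_cpow_const (c := (b:ℂ))
          (Da_mem_slitPlane ha (hcbU (Metric.ball_subset_closedBall hw)))).hasDerivAt.differentiableAt).differentiableWithinAt
      · intro w hw
        rw [closure_ball z' hr.ne'] at hw
        exact (Complex.continuousAt_cpow_const_of_re_pos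
          (sector_re_im ht0 htπ (hUsec (hcbU hw))) (by simpa using hb0)).continuousWithinAt
    have hφeq : φ z' = (2*Real.pi)⁻¹ * ∫ θ in (0:ℝ)..(2*Real.pi),
        φ (z' + r * Complex.exp (θ * Complex.I)) := holoMeanRe hr hdcc
    have hfint : IntervalIntegrable (fun θ : ℝ => f (z' + r * Complex.exp (θ * Complex.I)))
        MeasureTheory.volume 0 (2*Real.pi) := by
      apply Continuous.intervalIntegrable
      apply (hfc.mono (hcbU.trans subset_closure)).comp_continuous
        (circleParam_continuous z' r) (fun θ => circle_mem_closedBall z' hr θ)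
    have hφint : IntervalIntegrable (fun θ : ℝ => φ (z' + r * Complex.exp (θ * Complex.I)))
        MeasureTheory.volume 0 (2*Real.pi) := by
      apply Continuous.intervalIntegrable
      apply (hφc.mono (hcbU.trans hUsec)).comp_continuous
        (circleParam_continuous z' r) (fun θ => circle_mem_closedBall z' hr θ)
    rw [intervalIntegral.integral_sub hfint (by exact hφint.const_mul σ)]
    rw [intervalIntegral.integral_const_mul]
    rw [mul_sub]
    have : σ * φ z' = (2*Real.pi)⁻¹ * (σ * ∫ θ in (0:ℝ)..(2*Real.pi),
        φ (z' + r * Complex.exp (θ * Complex.I))) := by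
      rw [hφeq]; ring
    rw [show (2*Real.pi)⁻¹ * (σ * ∫ θ in (0:ℝ)..(2*Real.pi),
        φ (z' + r * Complex.exp (θ * Complex.I)))
        = σ * ((2*Real.pi)⁻¹ * ∫ θ in (0:ℝ)..(2*Real.pi),
        φ (z' + r * Complex.exp (θ * Complex.I))) from by ring, ← hφeq]
    exact sub_le_sub_right hf1 _
  -- Step 1: polynomial-type bound on all of closure U
  have step1 : ∀ ε : ℝ, 0 < ε → ∃ B, 0 ≤ B ∧ ∀ w ∈ closure U, f w ≤ ε * φ w + B := by
    intro ε hε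
    obtain ⟨B, hB0, hB⟩ := growth_bound hC hρ0 hbρ hc hε
    refine ⟨B, hB0, ?_⟩
    have hstep : ∀ w ∈ U, f w ≤ ε * φ w + B := by
      intro w hw
      have : w ∈ ⋃ i, K i := hK.union_eq ▸ hw
      obtain ⟨i, hwi⟩ := Set.mem_iUnion.1 this
      have hKiU : K i ⊆ U := (subset_closure).trans (hK.closure_subset i)
      have hclU : closure (K i) ⊆ U := hK.closure_subset i
      have hcont : ContinuousOn (fun y => f y - ε * φ y) (closure (K i)) :=
        (hfc.mono (hclU.trans subset_closure)).sub
          (continuousOn_const.mul (hφc.mono (hclU.trans hUsec)))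
      obtain ⟨x, hxfr, hxle⟩ := maxPrinciple (hK.isOpen i) (hK.compact_closure i)
        hcont (gsub ε (K i) hKiU) hwi
      have hxU : x ∈ U := hclU (frontier_subset_closure (s := K i) hxfr)
      have hfx : f x ≤ C * (‖x‖ ^ ρ + 1) := hKbd i x hxfr
      have h2 : C * (‖x‖ ^ ρ + 1) ≤ ε * c * ‖x‖ ^ b + B :=
        hB _ (norm_nonneg x)
      have h3 : ε * c * ‖x‖ ^ b ≤ ε * φ x := by
        have := hφlb x (hUsec hxU)
        calc ε * c * ‖x‖ ^ b = ε * (c * ‖x‖ ^ b) := by ring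
          _ ≤ ε * φ x := mul_le_mul_of_nonneg_left this hε.le
      have := hxle
      linarith
    intro w hw
    obtain ⟨s, hsU, hslim⟩ := mem_closure_iff_seq_limit.1 hw
    have htf : Filter.Tendsto (fun n => f (s n)) Filter.atTop (nhds (f w)) := by
      apply ((hfc w hw).tendsto).comp
      apply tendsto_nhdsWithin_of_tendsto_nhds_of_eventually_within _ hslim
      exact Filter.Eventually.of_forall (fun n => subset_closure (hsU n))
    have htφ : Filter.Tendsto (fun n => ε * φ (s n) + B) Filter.atTop
        (nhds (ε * φ w + B)) := by
      have := ((sector_continuousAt_cpow ht0 htπ hb0 (hUsec' hw)).tendsto).comp hslim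
      exact (Filter.Tendsto.const_mul ε this).add_const B
    exact le_of_tendsto_of_tendsto' htf htφ (fun n => hstep (s n) (hsU n))
  -- Step 2
  have step2 : ∀ ε' : ℝ, 0 < ε' → f z ≤ M + ε' * φ z := by
    intro ε' hε'
    set ε : ℝ := ε' * c / 2 with hεdef
    have hε : 0 < ε := by rw [hεdef]; positivity
    obtain ⟨B, hB0, hB⟩ := step1 ε hε
    -- choose R
    have h1 : ∀ᶠ R in Filter.atTop, (B - M)/ε ≤ R^b :=
      (tendsto_rpow_atTop hb0).eventually_ge_atTop _
    have h2 : ∀ᶠ R : ℝ in Filter.atTop, ‖z‖ < R := Filter.eventually_gt_atTop _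
    have h3 : ∀ᶠ R : ℝ in Filter.atTop, (0:ℝ) < R := Filter.eventually_gt_atTop _
    obtain ⟨R, hR⟩ := ((h1.and h2).and h3).exists
    obtain ⟨⟨hR1, hR2⟩, hR3⟩ := hR
    have hRM : B - ε * R^b ≤ M := by
      have : B - M ≤ ε * R^b := by
        rw [div_le_iff₀ hε] at hR1; linarith [hR1]
      linarith
    set V : Set ℂ := U ∩ Metric.ball 0 R with hVdef
    have hVo : IsOpen V := hUo.inter Metric.isOpen_ball
    have hVcl : closure V ⊆ Metric.closedBall 0 R := by
      calc closure V ⊆ closure (Metric.ball 0 R) :=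
            closure_mono Set.inter_subset_right
        _ = Metric.closedBall 0 R := closure_ball 0 hR3.ne'
    have hVclU : closure V ⊆ closure U := closure_mono Set.inter_subset_left
    have hVb : IsCompact (closure V) :=
      (isCompact_closedBall 0 R).of_isClosed_subset isClosed_closure hVcl
    have hzV : z ∈ V := ⟨hz, by
      rw [Metric.mem_ball, dist_eq_norm]
      simpa using hR2⟩
    have hcont : ContinuousOn (fun y => f y - ε' * φ y) (closure V) :=
      (hfc.mono hVclU).sub (continuousOn_const.mul (hφc.mono (hVclU.trans hUsec')))
    obtain ⟨x, hxfr, hxle⟩ := maxPrinciple hVo hVb hcont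
      (gsub ε' V Set.inter_subset_left) hzV
    have hxcases := frontier_inter_subset U (Metric.ball 0 R) hxfr
    have hxbound : f x - ε' * φ x ≤ M := by
      rcases hxcases with hcase | hcase
      · -- frontier of U
        have hfx : f x ≤ M := hM x hcase.1
        have hφx : 0 ≤ φ x := hφ0 x (hUsec' (frontier_subset_closure (s := U) hcase.1))
        nlinarith
      · -- sphere of radius R
        obtain ⟨hxclU, hxsp⟩ := hcase
        rw [frontier_ball 0 hR3.ne'] at hxsp
        have hxR : ‖x‖ = R := by
          rw [Metric.mem_sphere, dist_eq_norm] at hxsp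
          simpa using hxsp
        have hxsec : x ∈ SectorCl t := hUsec' hxclU
        have hfx : f x ≤ ε * φ x + B := hB x hxclU
        have hup : φ x ≤ R^b := by
          have := hφub x hxsec; rwa [hxR] at this
        have hlow : ε' * c * R^b ≤ ε' * φ x := by
          have := hφlb x hxsec
          rw [hxR] at this
          calc ε' * c * R^b = ε' * (c * R^b) := by ring
            _ ≤ ε' * φ x := mul_le_mul_of_nonneg_left this hε'.le
        have hεc : ε' * c = 2 * ε := by rw [hεdef]; ring
        have hφx0 : 0 ≤ φ x := hφ0 x hxsec
        have hRb0 : 0 ≤ R^b := Real.rpow_nonneg hR3.le b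
        nlinarith
    linarith
  -- Step 3
  have hφz : 0 ≤ φ z := hφ0 z (hUsec hz)
  apply le_of_forall_pos_le_add
  intro δ hδ
  have hε' : 0 < δ / (φ z + 1) := by positivity
  have := step2 _ hε'
  have h2 : δ / (φ z + 1) * φ z ≤ δ := by
    rw [div_mul_eq_mul_div, div_le_iff₀ (by linarith : (0:ℝ) < φ z + 1)]
    nlinarith
  linarith
end

section
/- Let a>1/2 and R>0. Let f be a real-valued C^∞ function, subharmonic on an open neighbourhood of D̄_a(R). Assume: (i) f is bounded from above on the topological boundary ∂D̄_a(R); (ii) there exist C>0, 0<ρ<a, and an exhaustive family {K_i} of D_a(R) such that f ≤ C(|z|^ρ+1) on ∂K_i for every i. Then f is bounded from above on D̄_a(R). -/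
section Helpers

open Complex Metric Set Real


lemma abs_arg_eq_arccos {z : ℂ} (hz : z ≠ 0) :
    |Complex.arg z| = Real.arccos (z.re / ‖z‖) := by
  rw [← Complex.cos_arg hz, ← Real.cos_abs]
  exact (Real.arccos_cos (abs_nonneg _) (Complex.abs_arg_le_pi z)).symm

lemma isOpen_Da (a R : ℝ) (hR : 0 < R) :
    IsOpen {z : ℂ | R < ‖z‖ ∧ |Complex.arg z| < Real.pi / (2 * a)} := by
  have h1 : IsOpen {z : ℂ | R < ‖z‖} :=
    isOpen_lt continuous_const continuous_norm
  have h2 : ContinuousOn (fun z : ℂ => Real.arccos (z.re / ‖z‖))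
      {z : ℂ | R < ‖z‖} := by
    apply Real.continuous_arccos.comp_continuousOn
    exact (Complex.continuous_re.continuousOn.div
      continuous_norm.continuousOn (fun z hz => (hR.trans hz).ne'))
  have h3 := h2.isOpen_inter_preimage h1 (isOpen_Iio (a := Real.pi / (2 * a)))
  convert h3 using 1
  ext z
  simp only [Set.mem_setOf_eq, Set.mem_inter_iff, Set.mem_preimage, Set.mem_Iio]
  constructor
  · rintro ⟨h, h'⟩
    have hz : z ≠ 0 := by intro h0; simp [h0] at h; linarith
    exact ⟨h, by rwa [← abs_arg_eq_arccos hz]⟩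
  · rintro ⟨h, h'⟩
    have hz : z ≠ 0 := by intro h0; simp [h0] at h; linarith
    exact ⟨h, by rwa [abs_arg_eq_arccos hz]⟩

lemma isClosed_Sa (a R : ℝ) (hR : 0 < R) :
    IsClosed {z : ℂ | R ≤ ‖z‖ ∧ |Complex.arg z| ≤ Real.pi / (2 * a)} := by
  have h1 : IsClosed {z : ℂ | R ≤ ‖z‖} :=
    isClosed_le continuous_const continuous_norm
  have h2 : ContinuousOn (fun z : ℂ => Real.arccos (z.re / ‖z‖))
      {z : ℂ | R ≤ ‖z‖} := by
    apply Real.continuous_arccos.comp_continuousOn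
    exact Complex.continuous_re.continuousOn.div
      continuous_norm.continuousOn (fun z hz => (hR.trans_le hz).ne')
  have h3 := h2.preimage_isClosed_of_isClosed h1 (isClosed_Iic (a := Real.pi / (2 * a)))
  convert h3 using 1
  ext z
  simp only [Set.mem_setOf_eq, Set.mem_inter_iff, Set.mem_preimage, Set.mem_Iic]
  constructor
  · rintro ⟨h, h'⟩
    have hz : z ≠ 0 := by intro h0; simp [h0] at h; linarith
    exact ⟨h, by rwa [← abs_arg_eq_arccos hz]⟩
  · rintro ⟨h, h'⟩
    have hz : z ≠ 0 := by intro h0; simp [h0] at h; linarith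
    exact ⟨h, by rwa [abs_arg_eq_arccos hz]⟩


/-- Mean value property for holomorphic functions (real part form). -/
lemma holo_mean_value {φ : ℂ → ℂ} {V : Set ℂ} (hV : IsOpen V)
    (hφ : DifferentiableOn ℂ φ V) {z : ℂ} {r : ℝ} (hr : 0 < r)
    (hsub : Metric.closedBall z r ⊆ V) :
    ∫ θ in (0:ℝ)..(2 * Real.pi), φ (z + r * Complex.exp (θ * Complex.I)) =
      (2 * Real.pi : ℂ) * φ z := by
  have hcl : closure (Metric.ball z r) = Metric.closedBall z r := closure_ball z hr.ne'
  have hd : DiffContOnCl ℂ φ (Metric.ball z r) := by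
    refine DifferentiableOn.diffContOnCl ?_
    rw [hcl]; exact hφ.mono hsub
  have hz : z ∈ Metric.ball z r := Metric.mem_ball_self hr
  have hc := hd.circleIntegral_sub_inv_smul hz
  rw [circleIntegral] at hc
  have hint : ∀ θ : ℝ, (deriv (circleMap z r) θ) •
      ((circleMap z r θ - z)⁻¹ • φ (circleMap z r θ)) = Complex.I * φ (circleMap z r θ) := by
    intro θ
    rw [deriv_circleMap, circleMap_sub_center]
    have hne : circleMap 0 r θ ≠ 0 := by
      intro h
      have := norm_circleMap_zero r θ
      rw [h] at this; simp at this; exact hr.ne' (by rw [abs_of_pos hr] at this; linarith)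
    field_simp
    rw [smul_eq_mul, smul_eq_mul, one_div, show circleMap 0 r θ * I * ((circleMap 0 r θ)⁻¹ * φ (circleMap z r θ)) = (circleMap 0 r θ * (circleMap 0 r θ)⁻¹) * I * φ (circleMap z r θ) by ring, mul_inv_cancel₀ hne, one_mul]
  simp only [hint] at hc
  rw [intervalIntegral.integral_const_mul] at hc
  have hI : (Complex.I : ℂ) ≠ 0 := Complex.I_ne_zero
  have h2 : (2 * Real.pi * Complex.I : ℂ) • φ z = Complex.I * ((2 * Real.pi : ℂ) * φ z) := by
    simp [smul_eq_mul]; ring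
  rw [h2] at hc
  have := mul_left_cancel₀ hI hc
  rw [← this]
  apply intervalIntegral.integral_congr
  intro θ _
  simp [circleMap]

lemma holo_mean_value_re {φ : ℂ → ℂ} {V : Set ℂ} (hV : IsOpen V)
    (hφ : DifferentiableOn ℂ φ V) {z : ℂ} {r : ℝ} (hr : 0 < r)
    (hsub : Metric.closedBall z r ⊆ V) :
    ∫ θ in (0:ℝ)..(2 * Real.pi), (φ (z + r * Complex.exp (θ * Complex.I))).re =
      2 * Real.pi * (φ z).re := by
  have key := holo_mean_value hV hφ hr hsub
  have hcont : Continuous fun θ : ℝ => φ (z + r * Complex.exp (θ * Complex.I)) := by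
    apply (hφ.continuousOn.mono (fun w hw => hsub hw)).comp_continuous
    · exact continuous_const.add (continuous_const.mul
        (Complex.continuous_exp.comp (Complex.continuous_ofReal.mul continuous_const)))
    · intro θ
      simp only [Metric.mem_closedBall, dist_eq_norm]
      simp [norm_mul, abs_of_pos hr, Complex.norm_exp]
  have hInt : IntervalIntegrable (fun θ : ℝ => φ (z + r * Complex.exp (θ * Complex.I)))
      MeasureTheory.volume 0 (2 * Real.pi) := hcont.intervalIntegrable 0 (2 * Real.pi)
  have := Complex.reCLM.intervalIntegral_comp_comm hInt
  simp only [Complex.reCLM_apply] at this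
  rw [this, key]
  simp


lemma max_principle (U : Set ℂ) (hU : IsOpen U) (hb : Bornology.IsBounded U)
    (g : ℂ → ℝ) (hg : ContinuousOn g (closure U))
    (hsub : ∀ z ∈ U, ∀ r : ℝ, 0 < r → Metric.closedBall z r ⊆ U →
      g z ≤ (2 * Real.pi)⁻¹ *
        ∫ θ in (0:ℝ)..(2 * Real.pi), g (z + r * Complex.exp (θ * Complex.I)))
    (M : ℝ) (hM : ∀ w ∈ frontier U, g w ≤ M) :
    ∀ z ∈ U, g z ≤ M := by
  intro z hz
  by_contra hlt
  push_neg at hlt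
  have hne : (closure U).Nonempty := ⟨z, subset_closure hz⟩
  have hcpt : IsCompact (closure U) := Metric.isCompact_of_isClosed_isBounded isClosed_closure hb.closure
  obtain ⟨z₀, hz₀, hmax⟩ := hcpt.exists_isMaxOn hne hg
  set m := g z₀ with hm
  have hml : M < m := lt_of_lt_of_le hlt (hmax (subset_closure hz))
  set T := closure U ∩ g ⁻¹' {m} with hT
  have hTne : T.Nonempty := ⟨z₀, hz₀, rfl⟩
  have hTclosed : IsClosed T := hg.preimage_isClosed_of_isClosed isClosed_closure
    isClosed_singleton
  have hTc : IsCompact T := hcpt.of_isClosed_subset hTclosed inter_subset_left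
  have hTU : T ⊆ U := by
    intro w hw
    by_contra hwU
    have hwf : w ∈ frontier U := by
      rw [hU.frontier_eq]; exact ⟨hw.1, hwU⟩
    have : g w ≤ M := hM w hwf
    have : g w = m := hw.2
    linarith
  obtain ⟨w₀, hw₀T, hw₀max⟩ := hTc.exists_isMaxOn hTne Complex.continuous_re.continuousOn
  have hw₀U : w₀ ∈ U := hTU hw₀T
  obtain ⟨ε, hε, hball⟩ := Metric.isOpen_iff.1 hU w₀ hw₀U
  set r := ε / 2 with hrdef
  have hr : 0 < r := by positivity
  have hcb : Metric.closedBall w₀ r ⊆ U :=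
    (Metric.closedBall_subset_ball (by rw [hrdef]; linarith)).trans hball
  have h1 := hsub w₀ hw₀U r hr hcb
  set F := fun θ : ℝ => g (w₀ + r * Complex.exp (θ * Complex.I)) with hF
  have hmem : ∀ θ : ℝ, w₀ + r * Complex.exp (θ * Complex.I) ∈ Metric.closedBall w₀ r := by
    intro θ
    simp only [Metric.mem_closedBall, dist_eq_norm]
    simp [norm_mul, abs_of_pos hr, Complex.norm_exp]
  have hFc : Continuous F := by
    apply (hg.mono ((hcb.trans subset_closure))).comp_continuous
    · exact continuous_const.add (continuous_const.mul
        (Complex.continuous_exp.comp (Complex.continuous_ofReal.mul continuous_const)))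
    · exact hmem
  have hFle : ∀ θ : ℝ, F θ ≤ m := fun θ => hmax (subset_closure (hcb (hmem θ)))
  have hF0 : F 0 < m := by
    have h0 : w₀ + r * Complex.exp ((0:ℝ) * Complex.I) = w₀ + r := by simp
    rcases lt_or_eq_of_le (hFle 0) with h | h
    · exact h
    · exfalso
      have hmemT : w₀ + r ∈ T := ⟨subset_closure (hcb (by simpa [h0] using hmem 0)), by
        simpa [hF, h0] using h⟩
      have := hw₀max hmemT
      simp only [Complex.add_re, Complex.ofReal_re] at this
      have : (w₀ + r).re ≤ w₀.re := this
      simp only [Complex.add_re, Complex.ofReal_re] at this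
      linarith
  have h2pi : (0:ℝ) < 2 * Real.pi := by positivity
  have hstrict : (∫ θ in (0:ℝ)..(2 * Real.pi), F θ) <
      ∫ θ in (0:ℝ)..(2 * Real.pi), (fun _ : ℝ => m) θ := by
    apply intervalIntegral.integral_lt_integral_of_continuousOn_of_le_of_exists_lt h2pi
      hFc.continuousOn continuousOn_const (fun θ _ => hFle θ)
    exact ⟨0, ⟨le_refl 0, h2pi.le⟩, hF0⟩
  rw [intervalIntegral.integral_const] at hstrict
  have : g w₀ < m := by
    calc g w₀ ≤ (2 * Real.pi)⁻¹ * ∫ θ in (0:ℝ)..(2 * Real.pi), F θ := h1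
    _ < (2 * Real.pi)⁻¹ * ((2 * Real.pi - 0) • m) := by
        apply mul_lt_mul_of_pos_left hstrict (by positivity)
    _ = m := by rw [sub_zero, smul_eq_mul]; field_simp
  have hgw : g w₀ = m := hw₀T.2
  linarith


lemma circle_mem (z : ℂ) {r : ℝ} (hr : 0 ≤ r) (θ : ℝ) :
    z + r * Complex.exp (θ * Complex.I) ∈ Metric.closedBall z r := by
  simp only [Metric.mem_closedBall, dist_eq_norm]
  simp [norm_mul, _root_.abs_of_nonneg hr, Complex.norm_exp]

lemma circle_cont {α : Type*} [TopologicalSpace α] {g : ℂ → α} {s : Set ℂ}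
    (hg : ContinuousOn g s) (z : ℂ) {r : ℝ} (hr : 0 ≤ r)
    (h : Metric.closedBall z r ⊆ s) :
    Continuous fun θ : ℝ => g (z + r * Complex.exp (θ * Complex.I)) := by
  apply (hg.mono (fun w hw => h hw)).comp_continuous
  · exact continuous_const.add (continuous_const.mul
      (Complex.continuous_exp.comp (Complex.continuous_ofReal.mul continuous_const)))
  · exact fun θ => circle_mem z hr θ

lemma exists_poly_bound (C ρ b η : ℝ) (hC : 0 < C) (hρ : 0 < ρ) (hb : ρ < b) (hη : 0 < η) :
    ∃ N : ℝ, ∀ r : ℝ, 0 ≤ r → C * (r ^ ρ + 1) - η * r ^ b ≤ N := by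
  set r₁ : ℝ := max 1 ((C / η) ^ (1 / (b - ρ))) with hr₁def
  have hr₁1 : (1:ℝ) ≤ r₁ := le_max_left _ _
  have hr₁0 : (0:ℝ) ≤ r₁ := by linarith
  refine ⟨C * (r₁ ^ ρ + 1), fun r hr => ?_⟩
  rcases le_total r r₁ with h | h
  · have h1 : r ^ ρ ≤ r₁ ^ ρ := Real.rpow_le_rpow hr h hρ.le
    have h2 : 0 ≤ η * r ^ b := by positivity
    nlinarith
  · have hrpos : (0:ℝ) < r := lt_of_lt_of_le one_pos (hr₁1.trans h)
    have hsub : (0:ℝ) < b - ρ := by linarith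
    have h3 : C / η ≤ r ^ (b - ρ) := by
      have h4 : (C / η) ^ (1 / (b - ρ)) ≤ r := (le_max_right _ _).trans h
      have h5 : ((C / η) ^ (1 / (b - ρ))) ^ (b - ρ) ≤ r ^ (b - ρ) :=
        Real.rpow_le_rpow (by positivity) h4 hsub.le
      rwa [← Real.rpow_mul (by positivity), one_div_mul_cancel hsub.ne', Real.rpow_one] at h5
    have h6 : C * r ^ ρ ≤ η * r ^ b := by
      have : r ^ b = r ^ ρ * r ^ (b - ρ) := by
        rw [← Real.rpow_add hrpos]; ring_nf
      rw [this]
      have h7 : C ≤ η * r ^ (b - ρ) := by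
        rw [div_le_iff₀ hη] at h3; linarith [h3]
      have h8 : (0:ℝ) ≤ r ^ ρ := by positivity
      nlinarith
    have h9 : (0:ℝ) ≤ r₁ ^ ρ := by positivity
    nlinarith

lemma sub_submean {f : ℂ → ℝ} {W : Set ℂ} (hfs : IsSubharmonicOn f W)
    {φ : ℂ → ℂ} (hφ : DifferentiableOn ℂ φ Complex.slitPlane) (ε : ℝ) (hε : 0 ≤ ε)
    {z : ℂ} {r : ℝ} (hr : 0 < r) (h1 : Metric.closedBall z r ⊆ W)
    (h2 : Metric.closedBall z r ⊆ Complex.slitPlane) :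
    f z - ε * (φ z).re ≤ (2 * Real.pi)⁻¹ *
      ∫ θ in (0:ℝ)..(2 * Real.pi),
        (f (z + r * Complex.exp (θ * Complex.I)) -
          ε * (φ (z + r * Complex.exp (θ * Complex.I))).re) := by
  have hm := hfs.2 z r hr h1
  have hmv := holo_mean_value_re Complex.isOpen_slitPlane hφ hr h2
  have hcA : Continuous fun θ : ℝ => f (z + r * Complex.exp (θ * Complex.I)) :=
    circle_cont hfs.1 z hr.le h1
  have hcB : Continuous fun θ : ℝ => (φ (z + r * Complex.exp (θ * Complex.I))).re :=
    circle_cont (Complex.continuous_re.comp_continuousOn hφ.continuousOn) z hr.le h2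
  have hiA : IntervalIntegrable (fun θ : ℝ => f (z + r * Complex.exp (θ * Complex.I)))
      MeasureTheory.volume 0 (2 * Real.pi) := hcA.intervalIntegrable 0 (2 * Real.pi)
  have hiB : IntervalIntegrable (fun θ : ℝ => (φ (z + r * Complex.exp (θ * Complex.I))).re)
      MeasureTheory.volume 0 (2 * Real.pi) := hcB.intervalIntegrable 0 (2 * Real.pi)
  have hsplit : (∫ θ in (0:ℝ)..(2 * Real.pi),
      (f (z + r * Complex.exp (θ * Complex.I)) -
        ε * (φ (z + r * Complex.exp (θ * Complex.I))).re)) =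
      (∫ θ in (0:ℝ)..(2 * Real.pi), f (z + r * Complex.exp (θ * Complex.I))) -
        ε * ∫ θ in (0:ℝ)..(2 * Real.pi), (φ (z + r * Complex.exp (θ * Complex.I))).re := by
    rw [intervalIntegral.integral_sub hiA (hiB.const_mul ε),
      intervalIntegral.integral_const_mul]
  rw [hsplit, hmv, mul_sub]
  have hπ : (2 * Real.pi)⁻¹ * (ε * (2 * Real.pi * (φ z).re)) = ε * (φ z).re := by
    have : Real.pi ≠ 0 := Real.pi_ne_zero
    field_simp
  rw [hπ]
  linarith

end Helpers

section Main
open Complex Metric Set Real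
set_option maxHeartbeats 2000000
/-- a smooth subharmonic function on a neighbourhood of the closed
sector, bounded above on the boundary and of slow growth on an exhaustive family,
is bounded above on the closed sector. -/
theorem subharmonic_bounded_above_on_sector
    (a R : ℝ) (ha : 1 / 2 < a) (hR : 0 < R)
    (f : ℂ → ℝ) (W : Set ℂ) (hW : IsOpen W) (hWc : closure (Da a R) ⊆ W)
    (hfsmooth : ContDiffOn ℝ (⊤ : ℕ∞) f W)
    (hfs : IsSubharmonicOn f W)
    (hbd0 : ∃ M₀ : ℝ, ∀ z ∈ frontier (Da a R), f z ≤ M₀)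
    (C ρ : ℝ) (hC : 0 < C) (hρ0 : 0 < ρ) (hρa : ρ < a)
    (K : ℕ → Set ℂ) (hK : ExhaustiveFamily K (Da a R))
    (hKbd : ∀ i, ∀ z ∈ frontier (K i), f z ≤ C * (‖z‖ ^ ρ + 1)) :
    ∃ M : ℝ, ∀ z ∈ closure (Da a R), f z ≤ M := by
  obtain ⟨M₀, hM₀⟩ := hbd0
  have ha0 : 0 < a := by linarith
  set b : ℝ := (ρ + a) / 2 with hbdef
  have hb0 : 0 < b := by rw [hbdef]; linarith
  have hρb : ρ < b := by rw [hbdef]; linarith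
  have hba : b < a := by rw [hbdef]; linarith
  set φ : ℂ → ℂ := fun w => w ^ (b:ℂ) with hφdef
  have hφdiff : DifferentiableOn ℂ φ Complex.slitPlane := fun w hw =>
    ((differentiableAt_id.cpow (differentiableAt_const _) hw).differentiableWithinAt)
  set c : ℝ := Real.cos (b * (Real.pi / (2 * a))) with hcdef
  have hangle : 0 < Real.pi / (2 * a) := by positivity
  have hangle2 : b * (Real.pi / (2 * a)) < Real.pi / 2 := by
    have h1 : b * (Real.pi / (2 * a)) < a * (Real.pi / (2 * a)) :=
      mul_lt_mul_of_pos_right hba hangle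
    have h2 : a * (Real.pi / (2 * a)) = Real.pi / 2 := by field_simp
    linarith
  have hanglepos : 0 ≤ b * (Real.pi / (2 * a)) := by positivity
  have hc0 : 0 < c := by
    rw [hcdef]
    apply Real.cos_pos_of_mem_Ioo
    constructor
    · have := Real.pi_pos; linarith
    · exact hangle2
  set S : Set ℂ := {w : ℂ | R ≤ ‖w‖ ∧ |Complex.arg w| ≤ Real.pi / (2 * a)}
    with hSdef
  have hSclosed : IsClosed S := isClosed_Sa a R hR
  have hDaopen : IsOpen (Da a R) := isOpen_Da a R hR
  have hDamem : ∀ w : ℂ, w ∈ Da a R ↔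
      (R < ‖w‖ ∧ |Complex.arg w| < Real.pi / (2 * a)) := fun w => Iff.rfl
  have hDaS : Da a R ⊆ S := fun w hw => ⟨((hDamem w).1 hw).1.le, ((hDamem w).1 hw).2.le⟩
  have hclS : closure (Da a R) ⊆ S := closure_minimal hDaS hSclosed
  have hSne : ∀ w ∈ S, w ≠ 0 := by
    intro w hw h0
    have := hw.1
    rw [h0] at this
    simp at this
    linarith
  have hSslit : S ⊆ Complex.slitPlane := by
    intro w hw
    rw [Complex.mem_slitPlane_iff_arg]
    refine ⟨fun hargpi => ?_, hSne w hw⟩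
    have h1 : |Complex.arg w| = Real.pi := by rw [hargpi]; exact abs_of_pos Real.pi_pos
    have h2 : Real.pi / (2 * a) < Real.pi := by
      apply div_lt_self Real.pi_pos; linarith
    have := hw.2
    rw [h1] at this
    linarith
  have hre_lb : ∀ w ∈ S, c * ‖w‖ ^ b ≤ (φ w).re := by
    intro w hw
    rw [hφdef]
    simp only []
    rw [re_cpow (hSne w hw) b]
    have h1 : c ≤ Real.cos (b * Complex.arg w) := by
      rw [← Real.cos_abs (b * Complex.arg w), hcdef]
      apply Real.cos_le_cos_of_nonneg_of_le_pi (abs_nonneg _)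
      · have := Real.pi_pos; linarith
      · rw [abs_mul, abs_of_pos hb0]
        exact mul_le_mul_of_nonneg_left hw.2 hb0.le
    have h2 : (0:ℝ) ≤ ‖w‖ ^ b := Real.rpow_nonneg (norm_nonneg w) b
    nlinarith
  have hre_ub : ∀ w : ℂ, w ≠ 0 → (φ w).re ≤ ‖w‖ ^ b := by
    intro w hw
    rw [hφdef]
    simp only []
    rw [re_cpow hw b]
    have h1 := Real.cos_le_one (b * Complex.arg w)
    have h2 : (0:ℝ) ≤ ‖w‖ ^ b := Real.rpow_nonneg (norm_nonneg w) b
    nlinarith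
  have hre_nonneg : ∀ w ∈ S, 0 ≤ (φ w).re := by
    intro w hw
    have h1 := hre_lb w hw
    have h2 : (0:ℝ) ≤ ‖w‖ ^ b := Real.rpow_nonneg (norm_nonneg w) b
    nlinarith
  have hDaW : Da a R ⊆ W := subset_closure.trans hWc
  have hDaslit : Da a R ⊆ Complex.slitPlane := hDaS.trans hSslit
  have hfcont : ContinuousOn f W := hfs.1
  have hgcont : ∀ ε : ℝ, ContinuousOn (fun w => f w - ε * (φ w).re)
      (W ∩ Complex.slitPlane) := by
    intro ε
    apply (hfcont.mono inter_subset_left).sub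
    exact continuousOn_const.mul
      ((Complex.continuous_re.comp_continuousOn hφdiff.continuousOn).mono inter_subset_right)
  have hkey : ∀ ε : ℝ, 0 ≤ ε → ∀ U' : Set ℂ, U' ⊆ Da a R → ∀ z ∈ U', ∀ r : ℝ, 0 < r →
      Metric.closedBall z r ⊆ U' →
      (fun w => f w - ε * (φ w).re) z ≤ (2 * Real.pi)⁻¹ *
        ∫ θ in (0:ℝ)..(2 * Real.pi),
          (fun w => f w - ε * (φ w).re) (z + r * Complex.exp (θ * Complex.I)) :=
    fun ε hε U' hU' z _ r hr hball =>
      sub_submean hfs hφdiff ε hε hr ((hball.trans hU').trans hDaW)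
        ((hball.trans hU').trans hDaslit)
  -- Step A
  have stepA : ∀ η : ℝ, 0 < η → ∃ N : ℝ, ∀ z ∈ Da a R,
      f z ≤ N + η * ‖z‖ ^ b := by
    intro η hη
    obtain ⟨N₀, hN₀⟩ := exists_poly_bound C ρ b (η * c) hC hρ0 hρb (by positivity)
    refine ⟨N₀, fun z hz => ?_⟩
    obtain ⟨i, hzi⟩ : ∃ i, z ∈ K i := mem_iUnion.1 (hK.union_eq ▸ hz)
    have hKiDa : K i ⊆ Da a R := subset_closure.trans (hK.closure_subset i)
    have hfr : ∀ w ∈ frontier (K i), (fun w => f w - η * (φ w).re) w ≤ N₀ := by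
      intro w hw
      have hwDa : w ∈ Da a R := (hK.closure_subset i) (frontier_subset_closure hw)
      have hfw := hKbd i w hw
      have hrw := hre_lb w (hDaS hwDa)
      have habs : (0:ℝ) ≤ ‖w‖ := norm_nonneg w
      have hbound := hN₀ (‖w‖) habs
      have hmul : η * (c * ‖w‖ ^ b) ≤ η * (φ w).re :=
        mul_le_mul_of_nonneg_left hrw hη.le
      simp only []
      nlinarith
    have hMP := max_principle (K i) (hK.isOpen i)
      ((hK.compact_closure i).isBounded.subset subset_closure)
      (fun w => f w - η * (φ w).re)
      ((hgcont η).mono (fun w hw =>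
        ⟨hDaW ((hK.closure_subset i) hw), hDaslit ((hK.closure_subset i) hw)⟩))
      (fun w hw r hr hball => hkey η hη.le (K i) hKiDa w hw r hr hball)
      N₀ hfr z hzi
    
    have hzne := hSne z (hDaS hz)
    have hub := hre_ub z hzne
    have hmul : η * (φ z).re ≤ η * ‖z‖ ^ b := mul_le_mul_of_nonneg_left hub hη.le
    linarith
  -- Step B
  have stepB : ∀ z ∈ Da a R, f z ≤ M₀ := by
    intro z hz
    have hzne := hSne z (hDaS hz)
    have hbd2 : ∀ ε : ℝ, 0 < ε → f z ≤ M₀ + ε * ‖z‖ ^ b := by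
      intro ε hε
      obtain ⟨N₂, hN₂⟩ := stepA (ε * c / 2) (by positivity)
      set A : ℝ := (N₂ - M₀) * (2 / (ε * c)) with hAdef
      obtain ⟨r, hrA, hrz, hrR⟩ : ∃ r : ℝ, A ≤ r ^ b ∧ ‖z‖ < r ∧ R < r := by
        have hev1 : ∀ᶠ r : ℝ in Filter.atTop, A ≤ r ^ b :=
          (tendsto_rpow_atTop hb0).eventually_ge_atTop A
        have hev2 : ∀ᶠ r : ℝ in Filter.atTop, ‖z‖ < r :=
          Filter.eventually_gt_atTop _
        have hev3 : ∀ᶠ r : ℝ in Filter.atTop, R < r := Filter.eventually_gt_atTop R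
        obtain ⟨r, h1, h2, h3⟩ := (hev1.and (hev2.and hev3)).exists
        exact ⟨r, h1, h2, h3⟩
      have hr0 : (0:ℝ) < r := hR.trans hrR
      set U' : Set ℂ := Da a R ∩ Metric.ball 0 r with hU'def
      have hbdry : ∀ v ∈ frontier (Da a R), f v - ε * (φ v).re ≤ M₀ := by
        intro v hv
        have hvS : v ∈ S := hclS (frontier_subset_closure hv)
        have h1 := hre_nonneg v hvS
        have h2 := hM₀ v hv
        nlinarith
      have hfr : ∀ w ∈ frontier U', (fun w => f w - ε * (φ w).re) w ≤ M₀ := by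
        intro w hw
        have hw' := frontier_inter_subset (Da a R) (Metric.ball 0 r) hw
        simp only [] 
        rcases hw' with h | h
        · exact hbdry w h.1
        · have hsph : w ∈ Metric.sphere (0:ℂ) r := by
            have h2 := h.2
            rwa [frontier_ball (0:ℂ) hr0.ne'] at h2
          have habsw : ‖w‖ = r := by
            rw [mem_sphere_zero_iff_norm] at hsph
            simpa using hsph
          by_cases hwDa : w ∈ Da a R
          · have h1 := hN₂ w hwDa
            have h2 := hre_lb w (hDaS hwDa)
            rw [habsw] at h1 h2
            have h4 : ε * c / 2 * A = N₂ - M₀ := by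
              rw [hAdef]; field_simp
            have h5 : ε * c / 2 * A ≤ ε * c / 2 * (r ^ b) :=
              mul_le_mul_of_nonneg_left hrA (by positivity)
            have h6 : ε * (c * r ^ b) ≤ ε * (φ w).re :=
              mul_le_mul_of_nonneg_left h2 hε.le
            nlinarith
          · have hwfr : w ∈ frontier (Da a R) := by
              rw [hDaopen.frontier_eq]
              exact ⟨h.1, hwDa⟩
            exact hbdry w hwfr
      have hzU' : z ∈ U' := by
        refine ⟨hz, ?_⟩
        rw [mem_ball_zero_iff]
        simpa using hrz
      have hMP := max_principle U' (hDaopen.inter Metric.isOpen_ball)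
        (Metric.isBounded_ball.subset inter_subset_right)
        (fun w => f w - ε * (φ w).re)
        ((hgcont ε).mono (fun w hw => by
          have hwcl : w ∈ closure (Da a R) := closure_mono inter_subset_left hw
          exact ⟨hWc hwcl, hSslit (hclS hwcl)⟩))
        (fun w hw r' hr' hball => hkey ε hε.le U' inter_subset_left w hw r' hr' hball)
        M₀ hfr z hzU'
      
      have hub := hre_ub z hzne
      have hmul : ε * (φ z).re ≤ ε * ‖z‖ ^ b := mul_le_mul_of_nonneg_left hub hε.le
      linarith
    -- limit ε → 0
    by_contra hcon
    push_neg at hcon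
    set t : ℝ := ‖z‖ ^ b with htdef
    have ht0 : 0 ≤ t := Real.rpow_nonneg (norm_nonneg z) b
    set d : ℝ := f z - M₀ with hddef
    have hd0 : 0 < d := by rw [hddef]; linarith
    clear_value t d
    have ht1 : (0:ℝ) < 2 * (t + 1) := by linarith
    have hbd3 := hbd2 (d / (2 * (t + 1))) (div_pos hd0 ht1)
    have hlt : d / (2 * (t + 1)) * t < d := by
      rw [div_mul_eq_mul_div, div_lt_iff₀ ht1]
      nlinarith [mul_nonneg hd0.le ht0]
    linarith
  -- conclude
  refine ⟨max M₀ M₀, fun z hz => ?_⟩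
  by_cases hzDa : z ∈ Da a R
  · exact le_trans (stepB z hzDa) (le_max_left _ _)
  · have : z ∈ frontier (Da a R) := by
      rw [hDaopen.frontier_eq]; exact ⟨hz, hzDa⟩
    exact le_trans (hM₀ z this) (le_max_right _ _)

end Main
end
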